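/- arXiv:1408.4997 — 7 statements merged into one kernel-verified Lean document; each statement's English description precedes it below -/
import Mathlib

section
/- Fix an integer n ≥ 2 and consider the strip of unit cells indexed by integers x with −2^(n−1) ≤ x < 2^(n−1), folded n times according to the folding model described in the context. Then the total number of folds at which the cell starting at x is reflected is odd (equivalently, the cell faces downwards in the final folded pile, having started face up) if and only if x is even. -/
/-- The fold threshold `c_k = 2^(n-1) - 2^(n-k)` (note `c_1 = 0`, matching the
first fold along `x = 0`). -/
def foldC (n k : ℕ) : ℤ := 2 ^ (n - 1) - 2 ^ (n - k)

/-- The position `q_k(x)` of the unit cell with left end point `x` after the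
first `k` of the `n` folds: `q_0(x) = x`, and at the `k`-th fold the cell is
reflected iff `q_{k-1}(x) < c_k`, in which case `q_k(x) = 2 c_k - 1 - q_{k-1}(x)`;
otherwise `q_k(x) = q_{k-1}(x)`. -/
def foldQ (n : ℕ) : ℕ → ℤ → ℤ
  | 0, x => x
  | k + 1, x =>
      let p := foldQ n k x
      if p < foldC n (k + 1) then 2 * foldC n (k + 1) - 1 - p else p

/-- The cell starting at `x` is reflected at the `k`-th fold (`1 ≤ k ≤ n`). -/
def reflectedAt (n k : ℕ) (x : ℤ) : Prop := foldQ n (k - 1) x < foldC n k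

instance (n k : ℕ) (x : ℤ) : Decidable (reflectedAt n k x) := by
  unfold reflectedAt; infer_instance

lemma foldQ_succ (n k : ℕ) (x : ℤ) :
    foldQ n (k + 1) x = if foldQ n k x < foldC n (k + 1) then
      2 * foldC n (k + 1) - 1 - foldQ n k x else foldQ n k x := rfl

lemma foldC_succ_eq (n k : ℕ) (hkn : k + 1 ≤ n) :
    2 * foldC n (k + 1) = foldC n k + 2 ^ (n - 1) := by
  unfold foldC
  have h1 : n - k = (n - (k + 1)) + 1 := by omega
  rw [h1, pow_succ]
  ring

lemma foldQ_bounds (n : ℕ) (x : ℤ)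
    (hx1 : -(2 ^ (n - 1)) ≤ x) (hx2 : x < 2 ^ (n - 1)) :
    ∀ k, 1 ≤ k → k ≤ n → foldC n k ≤ foldQ n k x ∧ foldQ n k x < 2 ^ (n - 1) := by
  intro k
  induction k with
  | zero => omega
  | succ k ih =>
    intro _ hkn
    by_cases hk : 1 ≤ k
    · obtain ⟨h1, h2⟩ := ih hk (by omega)
      have hc := foldC_succ_eq n k hkn
      rw [foldQ_succ]
      generalize foldQ n k x = q at h1 h2 ⊢
      generalize (2 : ℤ) ^ (n - 1) = P at h2 hc ⊢
      generalize foldC n k = a at h1 hc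
      generalize foldC n (k + 1) = b at hc ⊢
      split <;> omega
    · have hk0 : k = 0 := by omega
      subst hk0
      have hc1 : foldC n 1 = 0 := by simp [foldC]
      rw [foldQ_succ, hc1]
      show (0 : ℤ) ≤ _ ∧ _
      generalize (2 : ℤ) ^ (n - 1) = P at hx1 hx2 ⊢
      simp only [foldQ]
      split_ifs <;> omega

lemma foldQ_parity (n : ℕ) (x : ℤ) (k : ℕ) :
    Even (foldQ n k x + x) ↔
      Even ((Finset.Icc 1 k).filter (fun j => reflectedAt n j x)).card := by
  induction k with
  | zero => simp [foldQ]
  | succ k ih =>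
    have hIcc : Finset.Icc 1 (k + 1) = insert (k + 1) (Finset.Icc 1 k) := by
      ext j; simp [Finset.mem_Icc]; omega
    have hnotmem : k + 1 ∉ (Finset.Icc 1 k).filter (fun j => reflectedAt n j x) := by
      simp [Finset.mem_Icc]
    rw [hIcc, Finset.filter_insert, foldQ_succ]
    have hrefl : reflectedAt n (k + 1) x ↔ foldQ n k x < foldC n (k + 1) := Iff.rfl
    by_cases h : foldQ n k x < foldC n (k + 1)
    · rw [if_pos h, if_pos (hrefl.mpr h), Finset.card_insert_of_notMem hnotmem,
        Nat.even_add_one, ← ih]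
      simp only [Int.even_iff]
      omega
    · rw [if_neg h, if_neg (fun hc => h (hrefl.mp hc))]
      exact ih

/-- For `n ≥ 2` and a cell `[x, x+1)` of the strip `[-2^(n-1), 2^(n-1))` folded
`n` times, the total number of folds at which the cell is reflected is odd
(i.e. the cell ends face down, having started face up) iff `x` is even. -/
theorem stmt0 (n : ℕ) (hn : 2 ≤ n) (x : ℤ)
    (hx1 : -(2 ^ (n - 1)) ≤ x) (hx2 : x < 2 ^ (n - 1)) :
    Odd ((Finset.Icc 1 n).filter (fun k => reflectedAt n k x)).card ↔ Even x := by
  obtain ⟨h1, h2⟩ := foldQ_bounds n x hx1 hx2 n (by omega) le_rfl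
  have hcn : foldC n n = 2 ^ (n - 1) - 1 := by
    unfold foldC
    rw [Nat.sub_self, pow_zero]
  have hq : foldQ n n x = 2 ^ (n - 1) - 1 := by omega
  have hpar := foldQ_parity n x n
  rw [hq] at hpar
  have hP : (2 : ℤ) ^ (n - 1) % 2 = 0 := by
    rw [show n - 1 = (n - 2) + 1 from by omega, pow_succ]
    omega
  rw [← Nat.not_even_iff_odd, ← hpar]
  simp only [Int.even_iff]
  omega
end

section
/- For every d ≥ 1 the d-dimensional paperfolding substitution μd is primitive: there exists a positive integer k such that for every letter α ∈ A_d and every letter β ∈ A_d, β occurs among the values of the block μd^k(α). -/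
/-- The alphabet `A_d` of the `d`-dimensional paperfolding substitution:
a letter is a pair `(ε, p)` with `ε ∈ {−1, +1}^d` (crease signs on the lower
faces of a semi-cube, encoded in `ℤˣ`) and `p ∈ {0, 1}^d` (parities of the
reference point). -/
abbrev PFLetter (d : ℕ) := (Fin d → ℤˣ) × (Fin d → Fin 2)

/-- The sign `2δ − 1 ∈ {−1, +1}` associated to `δ ∈ {0, 1}`. -/
def deltaSign : Fin 2 → ℤˣ := fun δ => if δ = 0 then -1 else 1

/-- `N(p, i) = #{j : j ≥ i and p_j = 0}`. -/
def Npar (d : ℕ) (p : Fin d → Fin 2) (i : Fin d) : ℕ :=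
  (Finset.univ.filter (fun j : Fin d => i ≤ j ∧ p j = 0)).card

/-- The `d`-dimensional paperfolding substitution `μd`, sending a letter
`(ε, p)` to the block indexed by `δ ∈ {0,1}^d` with value `(ε', δ)`, where
`ε'_i = ε_i` if `δ_i = 0` and `ε'_i = (−1)^{N(p,i)} ∏_{j<i} (2δ_j − 1)`
if `δ_i = 1`. -/
def muSub (d : ℕ) (α : PFLetter d) (δ : Fin d → Fin 2) : PFLetter d :=
  (fun i => if δ i = 0 then α.1 i
    else (-1 : ℤˣ) ^ (Npar d α.2 i) *
      ∏ j ∈ Finset.univ.filter (fun j => j < i), deltaSign (δ j),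
   δ)

/-- The iterate `μd^k(α)`, a block with coordinates `x ∈ {0, …, 2^k − 1}^d`:
`μd^0(α)(0) = α` and `μd^{k+1}(α)(x) = μd(μd^k(α)(⌊x/2⌋))(x mod 2)`,
coordinatewise. -/
def muIter (d : ℕ) : ℕ → PFLetter d → (Fin d → ℕ) → PFLetter d
  | 0, α, _ => α
  | k + 1, α, x =>
      muSub d (muIter d k α (fun i => x i / 2))
        (fun i => if x i % 2 = 0 then 0 else 1)
namespace PFaux

/-- Downward-recursive extension with fuel. -/
def Tfun (inS s : ℕ → Bool) : ℕ → ℕ → Bool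
  | 0, _ => false
  | fuel + 1, i => if inS i then s i else Tfun inS s fuel (i + 1)

def Tf (d : ℕ) (inS s : ℕ → Bool) (i : ℕ) : Bool := Tfun inS s (d - i) i

lemma Tf_ge (d : ℕ) (inS s : ℕ → Bool) {i : ℕ} (h : d ≤ i) : Tf d inS s i = false := by
  unfold Tf; rw [Nat.sub_eq_zero_of_le h]; rfl

lemma Tf_lt (d : ℕ) (inS s : ℕ → Bool) {i : ℕ} (h : i < d) :
    Tf d inS s i = if inS i then s i else Tf d inS s (i + 1) := by
  unfold Tf
  have : d - i = (d - (i + 1)) + 1 := by omega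
  rw [this]; rfl

lemma Tf_inS (d : ℕ) (inS s : ℕ → Bool) {i : ℕ} (h : i < d) (hS : inS i = true) :
    Tf d inS s i = s i := by rw [Tf_lt d inS s h, hS]; simp

/-- The built digit function. -/
def pbuild (d : ℕ) (inS s : ℕ → Bool) : Fin d → Fin 2 :=
  fun i => if Tf d inS s i = Tf d inS s (i + 1) then 1 else 0

lemma pbuild_notS (d : ℕ) (inS s : ℕ → Bool) (i : Fin d) (h : inS i = false) :
    pbuild d inS s i = 1 := by
  unfold pbuild
  rw [Tf_lt d inS s i.isLt, h]
  simp

lemma pbuild_eq_zero_iff (d : ℕ) (inS s : ℕ → Bool) (j : Fin d) :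
    pbuild d inS s j = 0 ↔ ¬ (Tf d inS s j = Tf d inS s (j + 1)) := by
  unfold pbuild
  split <;> simp_all

lemma pow_card (T : ℕ → Bool) (a b : ℕ) (h : a ≤ b) :
    ((-1 : ℤˣ) ^ ((Finset.Ico a b).filter fun j => ¬ (T j = T (j + 1))).card) =
      (if T a = T b then 1 else -1) := by
  induction b with
  | zero =>
    have : a = 0 := by omega
    subst this; simp
  | succ b ih =>
    rcases Nat.eq_or_lt_of_le h with rfl | h'
    · simp
    · have hab : a ≤ b := by omega
      have hins : Finset.Ico a (b + 1) = insert b (Finset.Ico a b) := by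
        rw [Nat.Ico_succ_right_eq_insert_Ico hab]
      rw [hins, Finset.filter_insert]
      by_cases hb : T b = T (b + 1)
      · rw [if_neg (by simp [hb]), ih hab, hb]
      · rw [if_pos (by simp [hb]), Finset.card_insert_of_notMem (by simp)]
        rw [pow_succ, ih hab]
        cases hTa : T a <;> cases hTb : T b <;> cases hTb1 : T (b + 1) <;> simp_all

lemma Npar_pbuild (d : ℕ) (inS s : ℕ → Bool) (i : Fin d) :
    Npar d (pbuild d inS s) i =
      ((Finset.Ico (i : ℕ) d).filter fun n => ¬ (Tf d inS s n = Tf d inS s (n + 1))).card := by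
  unfold Npar
  rw [show ((Finset.Ico (i : ℕ) d).filter fun n => ¬ (Tf d inS s n = Tf d inS s (n + 1)))
      = (Finset.univ.filter fun j : Fin d => i ≤ j ∧ pbuild d inS s j = 0).image Fin.val from ?_]
  · rw [Finset.card_image_of_injective _ Fin.val_injective]
  · ext n
    simp only [Finset.mem_filter, Finset.mem_Ico, Finset.mem_image, Finset.mem_univ, true_and]
    constructor
    · rintro ⟨⟨h1, h2⟩, h3⟩
      exact ⟨⟨n, h2⟩, ⟨h1, (pbuild_eq_zero_iff d inS s ⟨n, h2⟩).2 h3⟩, rfl⟩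
    · rintro ⟨j, ⟨hij, hj0⟩, rfl⟩
      exact ⟨⟨hij, j.isLt⟩, (pbuild_eq_zero_iff d inS s j).1 hj0⟩

lemma neg_one_pow_Npar (d : ℕ) (inS s : ℕ → Bool) (i : Fin d) :
    ((-1 : ℤˣ) ^ Npar d (pbuild d inS s) i) =
      (if Tf d inS s i then -1 else 1) := by
  rw [Npar_pbuild, pow_card _ _ _ (le_of_lt i.isLt), Tf_ge d inS s le_rfl]
  cases h : Tf d inS s (i : ℕ) <;> simp

end PFaux

lemma fin2_cases : ∀ a : Fin 2, a = 0 ∨ a = 1 := by decide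

lemma digit1 : ∀ a b c : Fin 2,
    (if (4 * (a : ℕ) + 2 * (b : ℕ) + (c : ℕ)) % 2 = 0 then (0 : Fin 2) else 1) = c := by decide

lemma digit2 : ∀ a b c : Fin 2,
    (if (4 * (a : ℕ) + 2 * (b : ℕ) + (c : ℕ)) / 2 % 2 = 0 then (0 : Fin 2) else 1) = b := by
  decide

lemma digit3 : ∀ a b c : Fin 2,
    (if (4 * (a : ℕ) + 2 * (b : ℕ) + (c : ℕ)) / 2 / 2 % 2 = 0 then (0 : Fin 2) else 1) = a := by
  decide

open PFaux in
/-- The `d`-dimensional paperfolding substitution is primitive: there is a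
positive integer `k` such that for all letters `α, β`, the letter `β` occurs
among the values of the block `μd^k(α)`. -/
theorem stmt3 (d : ℕ) (hd : 1 ≤ d) :
    ∃ k : ℕ, 0 < k ∧ ∀ α β : PFLetter d, ∃ x : Fin d → ℕ,
      (∀ i, x i < 2 ^ k) ∧ muIter d k α x = β := by
  refine ⟨3, by norm_num, fun α β => ?_⟩
  obtain ⟨ε, q⟩ := β
  -- construct p
  set inSp : ℕ → Bool := fun n => if h : n < d then decide (q ⟨n, h⟩ = 1) else false with hinSp
  set sp : ℕ → Bool := fun n =>
    if h : n < d then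
      decide ((ε ⟨n, h⟩ *
        ∏ j ∈ Finset.univ.filter (fun j => j < (⟨n, h⟩ : Fin d)), deltaSign (q j)) = -1)
    else false with hsp
  set p : Fin d → Fin 2 := pbuild d inSp sp with hp
  -- construct r
  set inSr : ℕ → Bool := fun n => if h : n < d then decide (q ⟨n, h⟩ = 0) else false with hinSr
  set sr : ℕ → Bool := fun n =>
    if h : n < d then
      decide ((ε ⟨n, h⟩ *
        ∏ j ∈ Finset.univ.filter (fun j => j < (⟨n, h⟩ : Fin d)), deltaSign (p j)) = -1)
    else false with hsr
  set r : Fin d → Fin 2 := pbuild d inSr sr with hr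
  refine ⟨fun i => 4 * (r i : ℕ) + 2 * (p i : ℕ) + (q i : ℕ), fun i => ?_, ?_⟩
  · show 4 * (r i : ℕ) + 2 * (p i : ℕ) + (q i : ℕ) < 2 ^ 3
    have h1 := (r i).isLt
    have h2 := (p i).isLt
    have h3 := (q i).isLt
    have : (2 : ℕ) ^ 3 = 8 := rfl
    omega
  · have hx3 : muIter d 3 α (fun i => 4 * (r i : ℕ) + 2 * (p i : ℕ) + (q i : ℕ)) =
        muSub d (muSub d (muSub d α r) p) q := by
      simp only [muIter]
      rw [show (fun i => if (4 * (r i : ℕ) + 2 * (p i : ℕ) + (q i : ℕ)) % 2 = 0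
            then (0 : Fin 2) else 1) = q from funext fun i => digit1 (r i) (p i) (q i)]
      rw [show (fun i => if (4 * (r i : ℕ) + 2 * (p i : ℕ) + (q i : ℕ)) / 2 % 2 = 0
            then (0 : Fin 2) else 1) = p from funext fun i => digit2 (r i) (p i) (q i)]
      rw [show (fun i => if (4 * (r i : ℕ) + 2 * (p i : ℕ) + (q i : ℕ)) / 2 / 2 % 2 = 0
            then (0 : Fin 2) else 1) = r from funext fun i => digit3 (r i) (p i) (q i)]
    rw [hx3]
    simp only [muSub, Prod.mk.injEq]
    refine ⟨funext fun i => ?_, trivial⟩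
    by_cases hqi : q i = 0
    · -- q i = 0 branch
      have hSp : inSp (i : ℕ) = false := by
        rw [hinSp]; simp only [i.isLt, dif_pos, Fin.eta, hqi]; decide
      have hpi : p i = 1 := pbuild_notS d inSp sp i hSp
      rw [if_pos hqi, if_neg (by simp [hpi])]
      rw [hr, neg_one_pow_Npar d inSr sr i]
      have hSr : inSr (i : ℕ) = true := by
        rw [hinSr]; simp only [i.isLt, dif_pos, Fin.eta, hqi]; decide
      rw [Tf_inS d inSr sr i.isLt hSr, hsr]
      simp only [i.isLt, dif_pos, Fin.eta]
      rcases Int.units_eq_one_or (ε i) with h1 | h1 <;>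
        rcases Int.units_eq_one_or
          (∏ j ∈ Finset.univ.filter (fun j => j < i), deltaSign (p j)) with h2 | h2 <;>
        rw [h1, h2] <;> decide
    · -- q i = 1 branch
      have hqi1 : q i = 1 := (fin2_cases (q i)).resolve_left hqi
      rw [if_neg hqi]
      rw [hp, neg_one_pow_Npar d inSp sp i]
      have hSp : inSp (i : ℕ) = true := by
        rw [hinSp]; simp only [i.isLt, dif_pos, Fin.eta, hqi1]; decide
      rw [Tf_inS d inSp sp i.isLt hSp, hsp]
      simp only [i.isLt, dif_pos, Fin.eta]
      rcases Int.units_eq_one_or (ε i) with h1 | h1 <;>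
        rcases Int.units_eq_one_or
          (∏ j ∈ Finset.univ.filter (fun j => j < i), deltaSign (q j)) with h2 | h2 <;>
        rw [h1, h2] <;> decide
end

section
/- For every d ≥ 1, the d-dimensional paperfolding substitution μd admits a coincidence in the sense of Dekking: for every letter α ∈ A_d, the letter of the block μd^2(α) at position (3,3,…,3) is the same, namely the letter (ε*, p*) with ε*_i = +1 and p*_i = 1 for all i ∈ {1,…,d}. -/
/-- `μd` admits a coincidence in the sense of Dekking: for every letter `α`,
the letter of `μd^2(α)` at position `(3, 3, …, 3)` is the letter `(ε*, p*)`
with `ε*_i = +1` and `p*_i = 1` for all `i`. -/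
theorem stmt4 (d : ℕ) (hd : 1 ≤ d) (α : PFLetter d) :
    muIter d 2 α (fun _ => 3) =
      (fun _ => (1 : ℤˣ), fun _ => (1 : Fin 2)) := by
  have h1 : muIter d 1 α (fun _ => 1) = muSub d α (fun _ => 1) := by
    simp [muIter, muSub]
  show muSub d (muIter d 1 α (fun i => 3 / 2)) (fun i => if 3 % 2 = 0 then 0 else 1) = _
  norm_num
  rw [h1]
  unfold muSub
  ext i
  · simp [deltaSign, Npar, Finset.filter_eq_empty_iff]
  · rfl
end

section
/- For every d ≥ 1 there exists a constant C such that for every n ≥ 1, the number of distinct d-dimensional cubic blocks B : {0,…,n−1}^d → A_d that occur as a subblock of some iterate of the d-dimensional paperfolding substitution μd (i.e., for which there exist k ≥ 0, a letter α ∈ A_d, and an offset t ∈ ℤ^d with 0 ≤ t_i and t_i + n ≤ 2^k for all i, such that B(x) = μd^k(α)(x + t) for all x ∈ {0,…,n−1}^d) is at most C · n^d. -/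
/-- The set of distinct cubic blocks of linear size `n` occurring in some
iterate of `μd`. -/
def pfPatterns (d n : ℕ) : Set ((Fin d → Fin n) → PFLetter d) :=
  {B | ∃ (k : ℕ) (α : PFLetter d) (t : Fin d → ℕ),
    (∀ i, t i + n ≤ 2 ^ k) ∧
    ∀ x : Fin d → Fin n, B x = muIter d k α (fun i => (x i : ℕ) + t i)}

lemma muIter_add (d m r : ℕ) (α : PFLetter d) (y : Fin d → ℕ) :
    muIter d (m + r) α y =
      muIter d m (muIter d r α (fun i => y i / 2 ^ m)) (fun i => y i % 2 ^ m) := by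
  induction m generalizing y with
  | zero =>
      simp only [Nat.zero_add, pow_zero, Nat.div_one, Nat.mod_one, muIter]
  | succ m ih =>
      have h1 : m + 1 + r = (m + r) + 1 := by ring
      rw [h1]
      show muSub d (muIter d (m + r) α fun i => y i / 2)
          (fun i => if y i % 2 = 0 then 0 else 1) = _
      rw [ih]
      have hpow : (2 : ℕ) ^ (m + 1) = 2 * 2 ^ m := by ring
      have e1 : ∀ i : Fin d, y i / 2 / 2 ^ m = y i / 2 ^ (m + 1) := fun i => by
        rw [Nat.div_div_eq_div_mul, hpow]
      have e2 : ∀ i : Fin d, y i / 2 % 2 ^ m = y i % 2 ^ (m + 1) / 2 := fun i => by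
        rw [hpow]; exact (Nat.mod_mul_right_div_self _ _ _).symm
      have e3 : ∀ i : Fin d, y i % 2 = y i % 2 ^ (m + 1) % 2 := fun i =>
        (Nat.mod_mod_of_dvd _ (dvd_pow_self 2 (Nat.succ_ne_zero m))).symm
      exact congrArg₂ (muSub d)
        (congrArg₂ (muIter d m)
          (congrArg (muIter d r α) (funext e1)) (funext e2))
        (funext fun i => by rw [e3 i])

/-- There is a constant `C` such that for every `n ≥ 1`, the number of distinct
cubic subblocks of linear size `n` occurring in iterates of the `d`-dimensional
paperfolding substitution is at most `C · n^d`. -/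
theorem stmt5 (d : ℕ) (hd : 1 ≤ d) :
    ∃ C : ℕ, ∀ n : ℕ, 1 ≤ n →
      (pfPatterns d n).Finite ∧ (pfPatterns d n).ncard ≤ C * n ^ d := by
  refine ⟨Fintype.card (PFLetter d) ^ (2 ^ d) * 2 ^ d, fun n hn => ?_⟩
  set m := Nat.clog 2 n with hm
  have hM : 0 < 2 ^ m := Nat.pow_pos (n := m) (by norm_num)
  have hnM : n ≤ 2 ^ m := Nat.le_pow_clog (by norm_num) n
  -- the encoding map
  set F : ((Fin d → Fin 2) → PFLetter d) × (Fin d → Fin (2 ^ m)) →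
      ((Fin d → Fin n) → PFLetter d) :=
    fun Gs x => muIter d m
      (Gs.1 (fun i => if ((Gs.2 i : ℕ) + (x i : ℕ)) < 2 ^ m then 0 else 1))
      (fun i => ((Gs.2 i : ℕ) + (x i : ℕ)) % 2 ^ m) with hF
  have hsub : pfPatterns d n ⊆ Set.range F := by
    rintro B ⟨k, α, t, ht, hB⟩
    have hnk : n ≤ 2 ^ k := le_trans (Nat.le_add_left n (t ⟨0, hd⟩)) (ht ⟨0, hd⟩)
    have hmk : m ≤ k := (Nat.clog_le_iff_le_pow (by norm_num)).mpr hnk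
    set r := k - m with hr
    have hk : k = m + r := by omega
    refine ⟨(fun u => muIter d r α (fun i => t i / 2 ^ m + (u i : ℕ)),
            fun i => ⟨t i % 2 ^ m, Nat.mod_lt _ hM⟩), ?_⟩
    funext x
    have hBx := hB x
    rw [hk, muIter_add] at hBx
    rw [hF]
    simp only [hBx]
    have key1 : ∀ i : Fin d, t i / 2 ^ m +
        (((if t i % 2 ^ m + (x i : ℕ) < 2 ^ m then (0 : Fin 2) else 1) : Fin 2) : ℕ) =
        ((x i : ℕ) + t i) / 2 ^ m := by
      intro i
      have hdm := Nat.div_add_mod (t i) (2 ^ m)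
      have hxt : (x i : ℕ) + t i = (t i % 2 ^ m + (x i : ℕ)) + (t i / 2 ^ m) * 2 ^ m := by
        rw [Nat.mul_comm]; omega
      rw [hxt, Nat.add_mul_div_right _ _ hM]
      have h1 : t i % 2 ^ m < 2 ^ m := Nat.mod_lt _ hM
      have h2 : (x i : ℕ) < n := (x i).isLt
      by_cases hc : t i % 2 ^ m + (x i : ℕ) < 2 ^ m
      · rw [Nat.div_eq_of_lt hc]; simp [hc]
      · have hone : (t i % 2 ^ m + (x i : ℕ)) / 2 ^ m = 1 :=
          Nat.div_eq_of_lt_le (by omega) (by omega)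
        rw [hone]
        simp only [hc, if_false]
        simp [Fin.val_one]
        omega
    have key2 : ∀ i : Fin d, (t i % 2 ^ m + (x i : ℕ)) % 2 ^ m =
        ((x i : ℕ) + t i) % 2 ^ m := by
      intro i
      have hdm := Nat.div_add_mod (t i) (2 ^ m)
      have hxt : (x i : ℕ) + t i = (t i % 2 ^ m + (x i : ℕ)) + (t i / 2 ^ m) * 2 ^ m := by
        rw [Nat.mul_comm]; omega
      rw [hxt, Nat.add_mul_mod_self_right]
    exact congrArg₂ (muIter d m)
      (congrArg (muIter d r α) (funext key1)) (funext key2)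
  have hfin : (Set.range F).Finite := Set.finite_range F
  refine ⟨hfin.subset hsub, ?_⟩
  calc (pfPatterns d n).ncard ≤ (Set.range F).ncard := Set.ncard_le_ncard hsub hfin
    _ ≤ (Set.univ : Set (((Fin d → Fin 2) → PFLetter d) × (Fin d → Fin (2 ^ m)))).ncard := by
        rw [← Set.image_univ]
        exact Set.ncard_image_le (Set.finite_univ)
    _ = Fintype.card (PFLetter d) ^ (2 ^ d) * (2 ^ m) ^ d := by
        rw [Set.ncard_univ, Nat.card_eq_fintype_card]
        simp [Fintype.card_fun]
    _ ≤ Fintype.card (PFLetter d) ^ (2 ^ d) * 2 ^ d * n ^ d := by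
        have hM2n : 2 ^ m ≤ 2 * n := by
          rcases eq_or_lt_of_le hn with h1 | h2
          · rw [hm, ← h1]
            simp
          · have hpos : 0 < m := Nat.clog_pos (by norm_num) h2
            have hlt : 2 ^ (m - 1) < n := by
              have := Nat.pow_pred_clog_lt_self (b := 2) (by norm_num) h2
              simpa [hm, Nat.pred_eq_sub_one] using this
            have h2m : 2 ^ m = 2 * 2 ^ (m - 1) := by
              rw [← pow_succ']
              congr 1
              omega
            omega
        calc Fintype.card (PFLetter d) ^ (2 ^ d) * (2 ^ m) ^ d
            ≤ Fintype.card (PFLetter d) ^ (2 ^ d) * (2 * n) ^ d :=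
              Nat.mul_le_mul_left _ (Nat.pow_le_pow_left hM2n d)
          _ = Fintype.card (PFLetter d) ^ (2 ^ d) * 2 ^ d * n ^ d := by ring
end

section
/- The substitution ν2 generates the 2-dimensional paperfolding structures: for every n ≥ 0 and all integers (x,y) with −2^n ≤ x < 2^n and −2^n ≤ y < 2^n, the creases v_{n+2}(x,y) and h_{n+2}(x,y) are nonzero, and the entry of the block ν2^n(Σ) at position (x + 2^n, y + 2^n) equals b_{ij}, where i = 2u + w with u = 1 if v_{n+2}(x,y) = −1 and u = 0 if v_{n+2}(x,y) = +1, w = 1 if h_{n+2}(x,y) = −1 and w = 0 if h_{n+2}(x,y) = +1; and j = 0 if x and y are both even, j = 1 if x is even and y is odd, j = 2 if x is odd and y is even, j = 3 if x and y are both odd. -/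
/-- The 16-letter alphabet `B = {bij : 0 ≤ i, j ≤ 3}` of the 2-dimensional
paperfolding substitution; the letter `bij` is the pair `(i, j)`. -/
abbrev PFB := Fin 4 × Fin 4

/-- A `2 × 2` block `[SW, SE; NW, NE]`, as a function of the coordinates
`(dx, dy) ∈ {0,1}²` (encoded as booleans, `true = 1`): `(0,0)` is the
bottom-left (SW) cell, the first coordinate is horizontal. -/
def ent (sw se nw ne : PFB) : Bool → Bool → PFB :=
  fun dx dy => if dy then (if dx then ne else nw) else (if dx then se else sw)

/-- The 2-dimensional paperfolding substitution `ν2`, sending each letter to a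
`2 × 2` block of letters (given here by the explicit table). -/
def nu2 : PFB → Bool → Bool → PFB :=
  fun b =>
    ![![ent (0,0) (0,2) (0,1) (1,3), ent (0,0) (2,2) (1,1) (2,3),
       ent (0,0) (2,2) (0,1) (3,3), ent (0,0) (0,2) (1,1) (0,3)],
      ![ent (1,0) (1,2) (0,1) (1,3), ent (1,0) (3,2) (1,1) (2,3),
       ent (1,0) (3,2) (0,1) (3,3), ent (1,0) (1,2) (1,1) (0,3)],
      ![ent (2,0) (0,2) (2,1) (1,3), ent (2,0) (2,2) (3,1) (2,3),
       ent (2,0) (2,2) (2,1) (3,3), ent (2,0) (0,2) (3,1) (0,3)],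
      ![ent (3,0) (1,2) (2,1) (1,3), ent (3,0) (3,2) (3,1) (2,3),
       ent (3,0) (3,2) (2,1) (3,3), ent (3,0) (1,2) (3,1) (0,3)]] b.1 b.2

/-- The iterate `ν2^k(b)`, a `2^k × 2^k` block with coordinates
`(x, y) ∈ {0, …, 2^k − 1}²` (`(0,0)` at the bottom-left, first coordinate
horizontal): `ν2^0(b)(0,0) = b` and
`ν2^{k+1}(b)(x,y) = ν2(ν2^k(b)(⌊x/2⌋, ⌊y/2⌋))(x mod 2, y mod 2)`. -/
def nu2Iter : ℕ → PFB → ℕ → ℕ → PFB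
  | 0, b, _, _ => b
  | k + 1, b, x, y =>
      nu2 (nu2Iter k b (x / 2) (y / 2)) (x % 2 == 1) (y % 2 == 1)

/-- The standard seed `Σ`: `Σ(0,0) = b13`, `Σ(1,0) = b01`, `Σ(0,1) = b32`,
`Σ(1,1) = b00`. -/
def pfSeed : ℕ → ℕ → PFB :=
  fun x y =>
    if x = 0 then (if y = 0 then (1,3) else (3,2))
    else (if y = 0 then (0,1) else (0,0))

/-- `ν2^k(Σ)(x,y) = ν2^k(Σ(⌊x/2^k⌋, ⌊y/2^k⌋))(x mod 2^k, y mod 2^k)`. -/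
def seedIter (k x y : ℕ) : PFB :=
  nu2Iter k (pfSeed (x / 2 ^ k) (y / 2 ^ k)) (x % 2 ^ k) (y % 2 ^ k)

/-- Signs of vertical creases of the 2-dimensional paperfolding pattern
`S_2(n)`: `vPF n x y` is the sign (`+1` valley, `−1` crest, `0` no crease) of
the crease on the vertical unit edge `{x} × [y, y+1]`.  It vanishes outside the
square `[−2^{n−1}, 2^{n−1}]²`; the central creases (on `x = 0`) are `+1`; and
creases strictly inside a quadrant `φ` come from a reflected copy of the
previous generation. -/
def vPF : ℕ → ℤ → ℤ → ℤ
  | 0, _, _ => 0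
  | n + 1, x, y =>
      if x = 0 then (if -(2 ^ n : ℤ) ≤ y ∧ y ≤ 2 ^ n - 1 then 1 else 0)
      else if n = 0 then 0
      else
        let φ1 : ℤ := if 0 < x then 1 else -1
        let φ2 : ℤ := if 0 ≤ y then 1 else -1
        let a : ℤ := x - φ1 * 2 ^ (n - 1)
        let b : ℤ := y - φ2 * 2 ^ (n - 1)
        φ1 * φ2 * vPF n (if 0 < x then a else -a) (if 0 ≤ y then b else -b - 1)

/-- Signs of horizontal creases of `S_2(n)`: `hPF n x y` is the sign of the
crease on the horizontal unit edge `[x, x+1] × {y}`. -/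
def hPF : ℕ → ℤ → ℤ → ℤ
  | 0, _, _ => 0
  | n + 1, x, y =>
      if y = 0 then
        (if 0 ≤ x ∧ x ≤ 2 ^ n - 1 then 1
         else if -(2 ^ n : ℤ) ≤ x ∧ x ≤ -1 then -1 else 0)
      else if n = 0 then 0
      else
        let φ1 : ℤ := if 0 ≤ x then 1 else -1
        let φ2 : ℤ := if 0 < y then 1 else -1
        let a : ℤ := x - φ1 * 2 ^ (n - 1)
        let b : ℤ := y - φ2 * 2 ^ (n - 1)
        φ1 * φ2 * hPF n (if 0 ≤ x then a else -a - 1) (if 0 < y then b else -b)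


def VfA : ℕ → ℤ → ℤ
  | x, y =>
    if x % 2 = 1 then (if Even (((x / 2 : ℕ) : ℤ) + y / 2) then 1 else -1)
    else if _h : x = 0 then 1
    else VfA (x / 2) (y / 2)
  termination_by x _ => x
  decreasing_by exact Nat.div_lt_self (by omega) (by omega)

lemma VfA_odd (a : ℕ) (y : ℤ) :
    VfA (2*a+1) y = if Even ((a:ℤ) + y/2) then 1 else -1 := by
  have h1 : (2*a+1) % 2 = 1 := by omega
  have h2 : (2*a+1)/2 = a := by omega
  rw [VfA]; simp [h1, h2]

lemma VfA_even (a : ℕ) (ha : a ≠ 0) (y : ℤ) : VfA (2*a) y = VfA a (y/2) := by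
  have h1 : ¬((2*a) % 2 = 1) := by omega
  have h2 : ¬(2*a = 0) := by omega
  have h3 : (2*a)/2 = a := by omega
  rw [VfA]; simp [h1, h2, h3]

lemma VfA_sign (x : ℕ) (y : ℤ) : VfA x y = 1 ∨ VfA x y = -1 := by
  induction x using Nat.strong_induction_on generalizing y with
  | _ x ih =>
    rcases Nat.eq_zero_or_pos x with rfl | hx
    · left; rw [VfA]; simp
    rcases Nat.even_or_odd x with ⟨a, rfl⟩ | ⟨a, rfl⟩
    · have ha : a ≠ 0 := by omega
      rw [show a + a = 2*a by ring, VfA_even a ha]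
      exact ih a (by omega) _
    · rw [VfA_odd]
      split <;> simp

lemma VfA_flipy (x : ℕ) (hx : x ≠ 0) (y : ℤ) : VfA x (-y-1) = -VfA x y := by
  induction x using Nat.strong_induction_on generalizing y with
  | _ x ih =>
    rcases Nat.even_or_odd x with ⟨a, rfl⟩ | ⟨a, rfl⟩
    · have ha : a ≠ 0 := by omega
      rw [show a + a = 2*a by ring, VfA_even a ha, VfA_even a ha]
      rw [show (-y-1)/2 = -(y/2)-1 by omega]
      exact ih a (by omega) ha _
    · rw [VfA_odd, VfA_odd]
      have h : Even ((a:ℤ) + (-y-1)/2) ↔ ¬ Even ((a:ℤ) + y/2) := by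
        rw [Int.even_iff, Int.even_iff]; omega
      by_cases hc : Even ((a:ℤ) + y/2)
      · rw [if_pos hc, if_neg (fun hh => (h.mp hh) hc)]
      · rw [if_neg hc, if_pos (h.mpr hc)]; ring

def Vf (x y : ℤ) : ℤ :=
  if 0 < x then VfA x.toNat y else if x = 0 then 1 else -VfA (-x).toNat y

lemma Vf_zero (y : ℤ) : Vf 0 y = 1 := by simp [Vf]

lemma Vf_neg (x y : ℤ) (hx : x ≠ 0) : Vf (-x) y = -Vf x y := by
  rcases lt_trichotomy x 0 with h | h | h
  · simp only [Vf, if_pos (by omega : 0 < -x), if_neg (by omega : ¬ 0 < x),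
      if_neg hx]
    simp
  · exact absurd h hx
  · simp only [Vf, if_neg (by omega : ¬ 0 < -x), if_neg (by omega : ¬ -x = 0),
      if_pos h, neg_neg]

lemma Vf_sign (x y : ℤ) : Vf x y = 1 ∨ Vf x y = -1 := by
  unfold Vf
  split
  · exact VfA_sign _ _
  split
  · simp
  · rcases VfA_sign (-x).toNat y with h | h <;> simp [h]

lemma Vf_odd (a y : ℤ) : Vf (2*a+1) y = if Even (a + y/2) then 1 else -1 := by
  rcases le_or_gt 0 a with ha | ha
  · have h1 : 0 < 2*a+1 := by omega
    have h2 : (2*a+1).toNat = 2*a.toNat+1 := by omega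
    rw [Vf, if_pos h1, h2, VfA_odd]
    congr 2
    omega
  · have h1 : ¬ 0 < 2*a+1 := by omega
    have h1' : ¬ (2*a+1 = 0) := by omega
    have h2 : (-(2*a+1)).toNat = 2*(-a-1).toNat+1 := by omega
    rw [Vf, if_neg h1, if_neg h1', h2, VfA_odd]
    have h3 : (((-a-1).toNat : ℤ)) = -a-1 := by omega
    rw [h3]
    have h : Even (-a-1 + y/2) ↔ ¬ Even (a + y/2) := by
      rw [Int.even_iff, Int.even_iff]; omega
    by_cases hc : Even (a + y/2)
    · rw [if_pos hc, if_neg (fun hh => (h.mp hh) hc)]; norm_num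
    · rw [if_neg hc, if_pos (h.mpr hc)]

lemma Vf_even (a y : ℤ) : Vf (2*a) y = Vf a (y/2) := by
  rcases lt_trichotomy a 0 with h | rfl | h
  · have h1 : ¬ 0 < 2*a := by omega
    have h1' : ¬ (2*a = 0) := by omega
    have h2 : (-(2*a)).toNat = 2*(-a).toNat := by omega
    rw [Vf, if_neg h1, if_neg h1', h2, VfA_even _ (by omega)]
    rw [Vf, if_neg (by omega), if_neg (by omega)]
  · simp [Vf_zero]
  · have h2 : (2*a).toNat = 2*a.toNat := by omega
    rw [Vf, if_pos (by omega), h2, VfA_even _ (by omega), Vf, if_pos h]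

lemma Vf_flipy (x y : ℤ) (hx : x ≠ 0) : Vf x (-y-1) = -Vf x y := by
  rcases lt_trichotomy x 0 with h | h | h
  · rw [Vf, if_neg (by omega), if_neg hx, Vf, if_neg (by omega), if_neg hx,
      VfA_flipy _ (by omega)]
  · exact absurd h hx
  · rw [Vf, if_pos h, Vf, if_pos h, VfA_flipy _ (by omega)]

lemma Vf_pow (M : ℕ) (y : ℤ) (hl : -2^(M+1) ≤ y) (hu : y ≤ 2^(M+1)-1) :
    Vf (2^M) y = if 0 ≤ y then 1 else -1 := by
  induction M generalizing y with
  | zero =>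
    have : (2:ℤ)^0 = 2*0+1 := by norm_num
    rw [this, Vf_odd]
    have : y/2 = if 0 ≤ y then 0 else -1 := by
      split <;> omega
    rw [this]
    split <;> simp
  | succ M ih =>
    have h2 : (2:ℤ)^(M+1) = 2*2^M := by ring
    rw [h2, Vf_even]
    have hK : (0:ℤ) < 2^(M+1) := by positivity
    have := ih (y/2) (by omega) (by omega)
    rw [this]
    have : (0 ≤ y/2) ↔ (0 ≤ y) := by omega
    simp only [this]

lemma Vf_shift : ∀ M : ℕ, 1 ≤ M → ∀ x y : ℤ, 1 ≤ x → x ≤ 2^(M+1) - 1 → x ≠ 2^M →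
    Vf (x - 2^M) (y - 2^M) = Vf x y := by
  intro M
  induction M with
  | zero => omega
  | succ M ih =>
    intro _ x y hx1 hx2 hx3
    rcases Int.even_or_odd x with ⟨a, ha⟩ | ⟨a, ha⟩
    · -- even
      rcases Nat.eq_zero_or_pos M with rfl | hM
      · omega
      have hP : (0:ℤ) < 2^M := by positivity
      have hP2 : (2:ℤ)^(M+1) = 2*2^M := by ring
      have hP3 : (2:ℤ)^(M+2) = 2*2^(M+1) := by ring
      have hx : x = 2*a := by omega
      subst hx
      rw [show 2*a - 2^(M+1) = 2*(a - 2^M) by rw [hP2]; ring,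
        show y - 2^(M+1) = y - 2^(M+1) from rfl, Vf_even, Vf_even]
      rw [show (y - 2^(M+1))/2 = y/2 - 2^M by rw [hP2]; omega]
      exact ih hM a (y/2) (by omega) (by rw [hP3] at hx2; omega) (by omega)
    · -- odd
      have hP : (0:ℤ) < 2^M := by positivity
      have hP2 : (2:ℤ)^(M+1) = 2*2^M := by ring
      have hx : x = 2*a+1 := by omega
      subst hx
      rw [show 2*a+1 - 2^(M+1) = 2*(a - 2^M)+1 by rw [hP2]; ring, Vf_odd, Vf_odd]
      have hdiv : (y - 2^(M+1))/2 = y/2 - 2^M := by rw [hP2]; omega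
      rw [hdiv]
      have h : Even (a - 2^M + (y/2 - 2^M)) ↔ Even (a + y/2) := by
        rw [Int.even_iff, Int.even_iff]; omega
      by_cases hc : Even (a + y/2)
      · rw [if_pos hc, if_pos (h.mpr hc)]
      · rw [if_neg hc, if_neg (fun hh => hc (h.mp hh))]

def HfA : ℕ → ℤ → ℤ
  | b, x =>
    if b % 2 = 1 then (if Even (((b / 2 : ℕ) : ℤ) + x) then 1 else -1)
    else if _h : b = 0 then 1
    else HfA (b / 2) (x / 2)
  termination_by b _ => b
  decreasing_by exact Nat.div_lt_self (by omega) (by omega)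

lemma HfA_odd (a : ℕ) (x : ℤ) :
    HfA (2*a+1) x = if Even ((a:ℤ) + x) then 1 else -1 := by
  have h1 : (2*a+1) % 2 = 1 := by omega
  have h2 : (2*a+1)/2 = a := by omega
  rw [HfA]; simp [h1, h2]

lemma HfA_even (a : ℕ) (ha : a ≠ 0) (x : ℤ) : HfA (2*a) x = HfA a (x/2) := by
  have h1 : ¬((2*a) % 2 = 1) := by omega
  have h2 : ¬(2*a = 0) := by omega
  have h3 : (2*a)/2 = a := by omega
  rw [HfA]; simp [h1, h2, h3]

lemma HfA_sign (b : ℕ) (x : ℤ) : HfA b x = 1 ∨ HfA b x = -1 := by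
  induction b using Nat.strong_induction_on generalizing x with
  | _ b ih =>
    rcases Nat.eq_zero_or_pos b with rfl | hb
    · left; rw [HfA]; simp
    rcases Nat.even_or_odd b with ⟨a, rfl⟩ | ⟨a, rfl⟩
    · have ha : a ≠ 0 := by omega
      rw [show a + a = 2*a by ring, HfA_even a ha]
      exact ih a (by omega) _
    · rw [HfA_odd]
      split <;> simp

lemma HfA_flipx (b : ℕ) (hb : b ≠ 0) (x : ℤ) : HfA b (-x-1) = -HfA b x := by
  induction b using Nat.strong_induction_on generalizing x with
  | _ b ih =>
    rcases Nat.even_or_odd b with ⟨a, rfl⟩ | ⟨a, rfl⟩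
    · have ha : a ≠ 0 := by omega
      rw [show a + a = 2*a by ring, HfA_even a ha, HfA_even a ha]
      rw [show (-x-1)/2 = -(x/2)-1 by omega]
      exact ih a (by omega) ha _
    · rw [HfA_odd, HfA_odd]
      have h : Even ((a:ℤ) + (-x-1)) ↔ ¬ Even ((a:ℤ) + x) := by
        rw [Int.even_iff, Int.even_iff]; omega
      by_cases hc : Even ((a:ℤ) + x)
      · rw [if_pos hc, if_neg (fun hh => (h.mp hh) hc)]
      · rw [if_neg hc, if_pos (h.mpr hc)]; norm_num

def Hf (x y : ℤ) : ℤ :=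
  if 0 < y then HfA y.toNat x
  else if y = 0 then (if 0 ≤ x then 1 else -1)
  else -HfA (-y).toNat x

lemma Hf_zero (x : ℤ) : Hf x 0 = if 0 ≤ x then 1 else -1 := by simp [Hf]

lemma Hf_negy (x y : ℤ) (hy : y ≠ 0) : Hf x (-y) = -Hf x y := by
  rcases lt_trichotomy y 0 with h | h | h
  · simp only [Hf, if_pos (by omega : 0 < -y), if_neg (by omega : ¬ 0 < y),
      if_neg hy]
    simp
  · exact absurd h hy
  · simp only [Hf, if_neg (by omega : ¬ 0 < -y), if_neg (by omega : ¬ -y = 0),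
      if_pos h, neg_neg]

lemma Hf_sign (x y : ℤ) : Hf x y = 1 ∨ Hf x y = -1 := by
  unfold Hf
  split
  · exact HfA_sign _ _
  split
  · split <;> simp
  · rcases HfA_sign (-y).toNat x with h | h <;> simp [h]

lemma Hf_odd (x b : ℤ) : Hf x (2*b+1) = if Even (b + x) then 1 else -1 := by
  rcases le_or_gt 0 b with hb | hb
  · have h1 : 0 < 2*b+1 := by omega
    have h2 : (2*b+1).toNat = 2*b.toNat+1 := by omega
    rw [Hf, if_pos h1, h2, HfA_odd]
    congr 2
    omega
  · have h1 : ¬ 0 < 2*b+1 := by omega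
    have h1' : ¬ (2*b+1 = 0) := by omega
    have h2 : (-(2*b+1)).toNat = 2*(-b-1).toNat+1 := by omega
    rw [Hf, if_neg h1, if_neg h1', h2, HfA_odd]
    have h3 : (((-b-1).toNat : ℤ)) = -b-1 := by omega
    rw [h3]
    have h : Even (-b-1 + x) ↔ ¬ Even (b + x) := by
      rw [Int.even_iff, Int.even_iff]; omega
    by_cases hc : Even (b + x)
    · rw [if_pos hc, if_neg (fun hh => (h.mp hh) hc)]; norm_num
    · rw [if_neg hc, if_pos (h.mpr hc)]

lemma Hf_even (x b : ℤ) : Hf x (2*b) = Hf (x/2) b := by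
  rcases lt_trichotomy b 0 with h | rfl | h
  · have h2 : (-(2*b)).toNat = 2*(-b).toNat := by omega
    rw [Hf, if_neg (by omega), if_neg (by omega), h2, HfA_even _ (by omega)]
    rw [Hf, if_neg (by omega), if_neg (by omega)]
  · rw [mul_zero, Hf_zero, Hf_zero]
    have : (0 ≤ x/2) ↔ (0 ≤ x) := by omega
    simp only [this]
  · have h2 : (2*b).toNat = 2*b.toNat := by omega
    rw [Hf, if_pos (by omega), h2, HfA_even _ (by omega), Hf, if_pos h]

lemma Hf_flipx (x y : ℤ) : Hf (-x-1) y = -Hf x y := by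
  rcases lt_trichotomy y 0 with h | h | h
  · rw [Hf, if_neg (by omega), if_neg (by omega), Hf, if_neg (by omega),
      if_neg (by omega), HfA_flipx _ (by omega)]
  · subst h
    rw [Hf_zero, Hf_zero]
    rcases le_or_gt 0 x with hx | hx
    · rw [if_pos hx, if_neg (by omega : ¬ (0:ℤ) ≤ -x-1)]
    · rw [if_neg (by omega : ¬ (0:ℤ) ≤ x), if_pos (by omega : (0:ℤ) ≤ -x-1)]
      norm_num
  · rw [Hf, if_pos h, Hf, if_pos h, HfA_flipx _ (by omega)]

lemma Hf_pow (M : ℕ) : ∀ x : ℤ, 0 ≤ x → x ≤ 2^(M+1)-1 →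
    Hf x (2^M) = if x < 2^M then 1 else -1 := by
  induction M with
  | zero =>
    intro x h0 h1
    have hx : x = 0 ∨ x = 1 := by omega
    rw [show (2:ℤ)^0 = 2*0+1 by norm_num, Hf_odd]
    rcases hx with rfl | rfl <;> norm_num
  | succ M ih =>
    intro x h0 h1
    have hK : (0:ℤ) < 2^M := by positivity
    have h2 : (2:ℤ)^(M+1) = 2*2^M := by ring
    have h3 : (2:ℤ)^(M+2) = 2*2^(M+1) := by ring
    rw [h2, Hf_even, ih (x/2) (by omega) (by omega)]
    have : (x/2 < 2^M) ↔ (x < 2*2^M) := by omega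
    simp only [this, ← h2]

lemma pm_eq {A B : Prop} [Decidable A] [Decidable B] (h : A ↔ B) :
    (if A then (1:ℤ) else -1) = (if B then (1:ℤ) else -1) := by
  by_cases hc : B
  · rw [if_pos hc, if_pos (h.mpr hc)]
  · rw [if_neg hc, if_neg (fun hh => hc (h.mp hh))]

lemma pm_neg {A B : Prop} [Decidable A] [Decidable B] (h : A ↔ ¬B) :
    (if A then (1:ℤ) else -1) = -(if B then (1:ℤ) else -1) := by
  by_cases hc : B
  · rw [if_pos hc, if_neg (fun hh => (h.mp hh) hc)]
  · rw [if_neg hc, if_pos (h.mpr hc)]; norm_num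

lemma Hf_one (x : ℤ) : Hf x 1 = if Even x then 1 else -1 := by
  have := Hf_odd x 0
  norm_num at this
  rw [this]

lemma Hf_shift : ∀ M : ℕ, 1 ≤ M → ∀ x y : ℤ, 0 ≤ x → x ≤ 2^(M+1) - 1 →
    1 ≤ y → y ≤ 2^(M+1) - 1 →
    Hf (x - 2^M) (y - 2^M) =
      (if y = 2^(M-1) ∨ y = 2^M ∨ y = 3*2^(M-1) then -1 else 1) * Hf x y := by
  intro M
  induction M with
  | zero => omega
  | succ M ih =>
    intro _ x y hx0 hx1 hy0 hy1
    have hcond : (y = 2^(M+1-1) ∨ y = 2^(M+1) ∨ y = 3*2^(M+1-1)) ↔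
        (y = 2^M ∨ y = 2^(M+1) ∨ y = 3*2^M) := by
      rw [show M+1-1 = M from rfl]
    rcases Int.even_or_odd y with ⟨b, hb⟩ | ⟨b, hb⟩
    · -- y even, y = 2*b
      have hy : y = 2*b := by omega
      subst hy
      have hP : (0:ℤ) < 2^M := by positivity
      have h2 : (2:ℤ)^(M+1) = 2*2^M := by ring
      have h3 : (2:ℤ)^(M+2) = 2*2^(M+1) := by ring
      rw [show 2*b - 2^(M+1) = 2*(b - 2^M) by rw [h2]; ring, Hf_even, Hf_even]
      rw [show (x - 2^(M+1))/2 = x/2 - 2^M by rw [h2]; omega]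
      rcases Nat.eq_zero_or_pos M with rfl | hM
      · -- M+1 = 1, y = 2b ∈ [1,3] so b = 1, y = 2
        norm_num at hx1 hy1 ⊢
        have hb1 : b = 1 := by omega
        subst hb1
        norm_num [Hf_zero, Hf_one]
        rw [pm_neg (by rw [Int.even_iff]; omega : (1 ≤ x/2) ↔ ¬ Even (x/2))]
      · have := ih hM (x/2) b (by omega) (by omega) (by omega) (by omega)
        rw [this]
        have hQ : (0:ℤ) < 2^(M-1) := by positivity
        have h4 : (2:ℤ)^M = 2*2^(M-1) := by
          rw [← pow_succ']; congr 1; omega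
        have hδ : (if b = 2^(M-1) ∨ b = 2^M ∨ b = 3*2^(M-1) then (-1:ℤ) else 1)
            = (if 2*b = 2^(M+1-1) ∨ 2*b = 2^(M+1) ∨ 2*b = 3*2^(M+1-1)
               then (-1:ℤ) else 1) := by
          simp only [show M+1-1 = M from rfl]
          by_cases hc : b = 2^(M-1) ∨ b = 2^M ∨ b = 3*2^(M-1)
          · refine (if_pos hc).trans (if_pos ?_).symm
            rcases hc with h|h|h
            · exact Or.inl (by omega)
            · exact Or.inr (Or.inl (by rw [h2]; omega))
            · exact Or.inr (Or.inr (by omega))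
          · refine (if_neg hc).trans (if_neg ?_).symm
            rintro (h|h|h)
            · exact hc (Or.inl (by omega))
            · exact hc (Or.inr (Or.inl (by rw [h2] at h; omega)))
            · exact hc (Or.inr (Or.inr (by omega)))
        rw [hδ]
    · -- y odd, y = 2*b+1
      have hy : y = 2*b+1 := by omega
      subst hy
      have hP : (0:ℤ) < 2^M := by positivity
      have h2 : (2:ℤ)^(M+1) = 2*2^M := by ring
      rw [show 2*b+1 - 2^(M+1) = 2*(b - 2^M)+1 by rw [h2]; ring, Hf_odd, Hf_odd]
      rcases Nat.eq_zero_or_pos M with rfl | hM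
      · have hδ : (if 2*b+1 = 2^(0+1-1) ∨ 2*b+1 = 2^(0+1) ∨ 2*b+1 = 3*2^(0+1-1)
            then (-1:ℤ) else 1) = -1 := by
          apply if_pos
          norm_num at hy0 hy1 ⊢
          omega
        rw [hδ, pm_neg (by rw [Int.even_iff, Int.even_iff]; norm_num; omega :
          Even (b - 2^0 + (x - 2^(0+1))) ↔ ¬ Even (b + x))]
        ring
      · have h4 : (2:ℤ)^M = 2*2^(M-1) := by
          rw [← pow_succ']; congr 1; omega
        have hQ : (0:ℤ) < 2^(M-1) := by positivity
        have hδ : (if 2*b+1 = 2^(M+1-1) ∨ 2*b+1 = 2^(M+1) ∨ 2*b+1 = 3*2^(M+1-1)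
            then (-1:ℤ) else 1) = 1 := by
          apply if_neg
          simp only [show M+1-1 = M from rfl]
          push_neg
          refine ⟨by omega, by omega, by omega⟩
        rw [hδ, pm_eq (by rw [Int.even_iff, Int.even_iff]; omega :
          Even (b - 2^M + (x - 2^(M+1))) ↔ Even (b + x))]
        ring

lemma vPF_succ (n : ℕ) (x y : ℤ) : vPF (n+1) x y =
    (if x = 0 then (if -(2 ^ n : ℤ) ≤ y ∧ y ≤ 2 ^ n - 1 then 1 else 0)
      else if n = 0 then 0
      else
        let φ1 : ℤ := if 0 < x then 1 else -1
        let φ2 : ℤ := if 0 ≤ y then 1 else -1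
        let a : ℤ := x - φ1 * 2 ^ (n - 1)
        let b : ℤ := y - φ2 * 2 ^ (n - 1)
        φ1 * φ2 * vPF n (if 0 < x then a else -a) (if 0 ≤ y then b else -b - 1)) := rfl

lemma hPF_succ (n : ℕ) (x y : ℤ) : hPF (n+1) x y =
    (if y = 0 then
        (if 0 ≤ x ∧ x ≤ 2 ^ n - 1 then 1
         else if -(2 ^ n : ℤ) ≤ x ∧ x ≤ -1 then -1 else 0)
      else if n = 0 then 0
      else
        let φ1 : ℤ := if 0 ≤ x then 1 else -1
        let φ2 : ℤ := if 0 < y then 1 else -1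
        let a : ℤ := x - φ1 * 2 ^ (n - 1)
        let b : ℤ := y - φ2 * 2 ^ (n - 1)
        φ1 * φ2 * hPF n (if 0 ≤ x then a else -a - 1) (if 0 < y then b else -b)) := rfl

lemma Vf_one (y : ℤ) : Vf 1 y = if Even (y/2) then 1 else -1 := by
  simpa using Vf_odd 0 y

lemma Vf_mone (y : ℤ) : Vf (-1) y = if Even (y/2) then -1 else 1 := by
  rw [show (-1:ℤ) = -(1:ℤ) from rfl, Vf_neg 1 y one_ne_zero, Vf_one]
  split <;> norm_num

lemma vq_pp (n : ℕ) (x y : ℤ) (hn : n ≠ 0) (hx : 0 < x) (hy : 0 ≤ y) :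
    vPF (n+1) x y = vPF n (x - 2^(n-1)) (y - 2^(n-1)) := by
  rw [vPF_succ]
  simp [show ¬ x = 0 by omega, hn, hx, hy]

lemma vq_pm (n : ℕ) (x y : ℤ) (hn : n ≠ 0) (hx : 0 < x) (hy : y < 0) :
    vPF (n+1) x y = -vPF n (x - 2^(n-1)) (-(y + 2^(n-1)) - 1) := by
  rw [vPF_succ]
  simp [show ¬ x = 0 by omega, hn, hx, show ¬ 0 ≤ y by omega]

lemma vq_mp (n : ℕ) (x y : ℤ) (hn : n ≠ 0) (hx : x < 0) (hy : 0 ≤ y) :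
    vPF (n+1) x y = -vPF n (-(x + 2^(n-1))) (y - 2^(n-1)) := by
  rw [vPF_succ]
  simp [show ¬ x = 0 by omega, hn, show ¬ 0 < x by omega, hy]

lemma vq_mm (n : ℕ) (x y : ℤ) (hn : n ≠ 0) (hx : x < 0) (hy : y < 0) :
    vPF (n+1) x y = vPF n (-(x + 2^(n-1))) (-(y + 2^(n-1)) - 1) := by
  rw [vPF_succ]
  simp [show ¬ x = 0 by omega, hn, show ¬ 0 < x by omega, show ¬ 0 ≤ y by omega]

lemma lemA_v : ∀ n : ℕ, ∀ x y : ℤ, -(2^(n+1)-1) ≤ x → x ≤ 2^(n+1)-1 →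
    -(2^(n+1)) ≤ y → y ≤ 2^(n+1)-1 → vPF (n+2) x y = Vf x y := by
  intro n
  induction n with
  | zero =>
    intro x y hx1 hx2 hy1 hy2
    norm_num at hx1 hx2 hy1 hy2
    interval_cases x <;> interval_cases y <;>
      norm_num [vPF_succ, Vf_one, Vf_mone, Vf_zero]
  | succ n ih =>
    intro x y hx1 hx2 hy1 hy2
    have hK : (0:ℤ) < 2^(n+1) := by positivity
    have h2 : (2:ℤ)^(n+2) = 2*2^(n+1) := by ring
    have hsub : (n+2) - 1 = n+1 := rfl
    by_cases hx0 : x = 0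
    · subst hx0
      rw [vPF_succ, if_pos rfl, if_pos (by constructor <;> omega), Vf_zero]
    rcases lt_or_gt_of_ne hx0 with hx | hx
    · rcases le_or_gt 0 y with hy | hy
      · -- x < 0, y ≥ 0
        rw [vq_mp (n+2) x y (by omega) hx hy, hsub]
        rw [show -(x + 2^(n+1)) = (-x) - 2^(n+1) by ring]
        rw [ih (-x - 2^(n+1)) (y - 2^(n+1)) (by omega) (by omega) (by omega) (by omega)]
        by_cases hxp : -x = 2^(n+1)
        · rw [show -x - 2^(n+1) = 0 by omega, Vf_zero]
          rw [show x = -(2^(n+1)) by omega, Vf_neg _ _ (by positivity),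
            Vf_pow (n+1) y (by omega) (by omega), if_pos hy]
        · rw [Vf_shift (n+1) (by omega) (-x) y (by omega) (by omega) hxp,
            show x = -(-x) by ring, Vf_neg (-x) y (by omega)]
          ring_nf
      · -- x < 0, y < 0
        rw [vq_mm (n+2) x y (by omega) hx hy, hsub]
        rw [show -(x + 2^(n+1)) = (-x) - 2^(n+1) by ring,
          show -(y + 2^(n+1)) - 1 = (-y-1) - 2^(n+1) by ring]
        rw [ih (-x - 2^(n+1)) ((-y-1) - 2^(n+1)) (by omega) (by omega) (by omega) (by omega)]
        by_cases hxp : -x = 2^(n+1)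
        · rw [show -x - 2^(n+1) = 0 by omega, Vf_zero]
          rw [show x = -(2^(n+1)) by omega, Vf_neg _ _ (by positivity),
            Vf_pow (n+1) y (by omega) (by omega), if_neg (by omega)]
          norm_num
        · rw [Vf_shift (n+1) (by omega) (-x) (-y-1) (by omega) (by omega) hxp,
            Vf_neg x _ hx0, Vf_flipy x y hx0]
          ring
    · rcases le_or_gt 0 y with hy | hy
      · -- x > 0, y ≥ 0
        rw [vq_pp (n+2) x y (by omega) hx hy, hsub]
        rw [ih (x - 2^(n+1)) (y - 2^(n+1)) (by omega) (by omega) (by omega) (by omega)]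
        by_cases hxp : x = 2^(n+1)
        · rw [show x - 2^(n+1) = 0 by omega, Vf_zero, hxp,
            Vf_pow (n+1) y (by omega) (by omega), if_pos hy]
        · exact Vf_shift (n+1) (by omega) x y (by omega) (by omega) hxp
      · -- x > 0, y < 0
        rw [vq_pm (n+2) x y (by omega) hx hy, hsub]
        rw [show -(y + 2^(n+1)) - 1 = (-y-1) - 2^(n+1) by ring]
        rw [ih (x - 2^(n+1)) ((-y-1) - 2^(n+1)) (by omega) (by omega) (by omega) (by omega)]
        by_cases hxp : x = 2^(n+1)
        · rw [show x - 2^(n+1) = 0 by omega, Vf_zero, hxp,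
            Vf_pow (n+1) y (by omega) (by omega), if_neg (by omega)]
        · rw [Vf_shift (n+1) (by omega) x (-y-1) (by omega) (by omega) hxp,
            Vf_flipy x y hx0]
          ring

lemma Hf_mone (x : ℤ) : Hf x (-1) = if Even x then -1 else 1 := by
  rw [show (-1:ℤ) = -(1:ℤ) from rfl, Hf_negy x 1 one_ne_zero, Hf_one]
  split <;> norm_num

lemma hq_pp (n : ℕ) (x y : ℤ) (hn : n ≠ 0) (hx : 0 ≤ x) (hy : 0 < y) :
    hPF (n+1) x y = hPF n (x - 2^(n-1)) (y - 2^(n-1)) := by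
  rw [hPF_succ]
  simp [show ¬ y = 0 by omega, hn, hx, hy]

lemma hq_pm (n : ℕ) (x y : ℤ) (hn : n ≠ 0) (hx : 0 ≤ x) (hy : y < 0) :
    hPF (n+1) x y = -hPF n (x - 2^(n-1)) (-(y + 2^(n-1))) := by
  rw [hPF_succ]
  simp [show ¬ y = 0 by omega, hn, hx, show ¬ 0 < y by omega]

lemma hq_mp (n : ℕ) (x y : ℤ) (hn : n ≠ 0) (hx : x < 0) (hy : 0 < y) :
    hPF (n+1) x y = -hPF n (-(x + 2^(n-1)) - 1) (y - 2^(n-1)) := by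
  rw [hPF_succ]
  simp [show ¬ y = 0 by omega, hn, show ¬ 0 ≤ x by omega, hy]

lemma hq_mm (n : ℕ) (x y : ℤ) (hn : n ≠ 0) (hx : x < 0) (hy : y < 0) :
    hPF (n+1) x y = hPF n (-(x + 2^(n-1)) - 1) (-(y + 2^(n-1))) := by
  rw [hPF_succ]
  simp [show ¬ y = 0 by omega, hn, show ¬ 0 ≤ x by omega, show ¬ 0 < y by omega]

lemma eps_delta (n : ℕ) (y : ℤ) (hy : 1 ≤ y) :
    (if y - 2^(n+1) = 2^n ∨ y - 2^(n+1) = -(2^n) then (-1:ℤ) else 1) *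
      (if y = 2^n ∨ y = 2^(n+1) ∨ y = 3*2^n then (-1:ℤ) else 1)
      = (if y = 2^(n+1) ∨ y = -(2^(n+1)) then (-1:ℤ) else 1) := by
  have h4 : (2:ℤ)^(n+1) = 2*2^n := by ring
  have hK : (0:ℤ) < 2^n := by positivity
  by_cases h1 : y = 2^n
  · rw [if_pos (Or.inr (by omega)), if_pos (Or.inl h1), if_neg (by omega)]
    norm_num
  by_cases h2 : y = 2^(n+1)
  · rw [if_neg (by omega), if_pos (Or.inr (Or.inl h2)), if_pos (Or.inl h2)]
    norm_num
  by_cases h3 : y = 3*2^n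
  · rw [if_pos (Or.inl (by omega)), if_pos (Or.inr (Or.inr h3)), if_neg (by omega)]
    norm_num
  · rw [if_neg (by omega), if_neg (by omega), if_neg (by omega)]
    norm_num

lemma eps_negy (n : ℕ) (y : ℤ) :
    (if -y = 2^(n+1) ∨ -y = -(2^(n+1)) then (-1:ℤ) else 1)
      = (if y = 2^(n+1) ∨ y = -(2^(n+1)) then (-1:ℤ) else 1) := by
  by_cases h : y = 2^(n+1) ∨ y = -(2^(n+1))
  · rw [if_pos (by omega), if_pos h]
  · rw [if_neg (by omega), if_neg h]

lemma lemA_h : ∀ n : ℕ, ∀ x y : ℤ, -(2^(n+1)) ≤ x → x ≤ 2^(n+1)-1 →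
    -(2^(n+1)-1) ≤ y → y ≤ 2^(n+1)-1 →
    hPF (n+2) x y = (if y = 2^n ∨ y = -(2^n) then -1 else 1) * Hf x y := by
  intro n
  induction n with
  | zero =>
    intro x y hx1 hx2 hy1 hy2
    norm_num at hx1 hx2 hy1 hy2
    interval_cases x <;> interval_cases y <;>
      norm_num [hPF_succ, Hf_one, Hf_mone, Hf_zero]
  | succ n ih =>
    intro x y hx1 hx2 hy1 hy2
    have hK : (0:ℤ) < 2^(n+1) := by positivity
    have hK0 : (0:ℤ) < 2^n := by positivity
    have h2 : (2:ℤ)^(n+2) = 2*2^(n+1) := by ring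
    have h4 : (2:ℤ)^(n+1) = 2*2^n := by ring
    have hsub : (n+2) - 1 = n+1 := rfl
    by_cases hy0 : y = 0
    · subst hy0
      rw [hPF_succ, if_pos rfl]
      have hε : (if (0:ℤ) = 2^(n+1) ∨ (0:ℤ) = -(2^(n+1)) then (-1:ℤ) else 1) = 1 :=
        if_neg (by omega)
      rw [hε, one_mul, Hf_zero]
      rcases le_or_gt 0 x with hx | hx
      · rw [if_pos ⟨hx, by omega⟩, if_pos hx]
      · rw [if_neg (by omega : ¬ ((0:ℤ) ≤ x ∧ x ≤ 2^(n+2) - 1)),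
          if_pos ⟨by omega, by omega⟩, if_neg (by omega : ¬ (0:ℤ) ≤ x)]
    rcases lt_or_gt_of_ne hy0 with hy | hy
    · -- y < 0
      rcases le_or_gt 0 x with hx | hx
      · rw [hq_pm (n+2) x y (by omega) hx hy, hsub,
          show -(y + 2^(n+1)) = (-y) - 2^(n+1) by ring,
          ih (x - 2^(n+1)) (-y - 2^(n+1)) (by omega) (by omega) (by omega) (by omega),
          Hf_shift (n+1) (by omega) x (-y) (by omega) (by omega) (by omega) (by omega)]
        rw [show (n+1) - 1 = n from rfl]
        rw [Hf_negy x y hy0]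
        have := eps_delta n (-y) (by omega)
        rw [show (-y) - 2^(n+1) = -y - 2^(n+1) by ring] at this
        rw [← mul_assoc, this, eps_negy]
        ring
      · rw [hq_mm (n+2) x y (by omega) hx hy, hsub,
          show -(y + 2^(n+1)) = (-y) - 2^(n+1) by ring,
          show -(x + 2^(n+1)) - 1 = (-x-1) - 2^(n+1) by ring,
          ih (-x-1 - 2^(n+1)) (-y - 2^(n+1)) (by omega) (by omega) (by omega) (by omega),
          Hf_shift (n+1) (by omega) (-x-1) (-y) (by omega) (by omega) (by omega) (by omega)]
        rw [show (n+1) - 1 = n from rfl]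
        rw [Hf_flipx x (-y), Hf_negy x y hy0]
        have := eps_delta n (-y) (by omega)
        rw [show (-y) - 2^(n+1) = -y - 2^(n+1) by ring] at this
        rw [← mul_assoc, this, eps_negy]
        ring
    · -- y > 0
      rcases le_or_gt 0 x with hx | hx
      · rw [hq_pp (n+2) x y (by omega) hx hy, hsub,
          ih (x - 2^(n+1)) (y - 2^(n+1)) (by omega) (by omega) (by omega) (by omega),
          Hf_shift (n+1) (by omega) x y (by omega) (by omega) (by omega) (by omega)]
        rw [show (n+1) - 1 = n from rfl]
        rw [← mul_assoc, eps_delta n y (by omega)]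
      · rw [hq_mp (n+2) x y (by omega) hx hy, hsub,
          show -(x + 2^(n+1)) - 1 = (-x-1) - 2^(n+1) by ring,
          ih (-x-1 - 2^(n+1)) (y - 2^(n+1)) (by omega) (by omega) (by omega) (by omega),
          Hf_shift (n+1) (by omega) (-x-1) y (by omega) (by omega) (by omega) (by omega)]
        rw [show (n+1) - 1 = n from rfl]
        rw [Hf_flipx x y]
        rw [← mul_assoc, eps_delta n y (by omega)]
        ring

lemma seedIter_zero (X Y : ℕ) : seedIter 0 X Y = pfSeed X Y := by
  simp [seedIter, nu2Iter]

lemma seedIter_succ (n X Y : ℕ) :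
    seedIter (n+1) X Y = nu2 (seedIter n (X/2) (Y/2)) (X % 2 == 1) (Y % 2 == 1) := by
  have hpow : (2:ℕ)^(n+1) = 2*2^n := by ring
  have e1 : X % 2^(n+1) / 2 = X/2 % 2^n := by
    rw [hpow]; exact Nat.mod_mul_right_div_self X 2 (2^n)
  have e1' : Y % 2^(n+1) / 2 = Y/2 % 2^n := by
    rw [hpow]; exact Nat.mod_mul_right_div_self Y 2 (2^n)
  have e2 : X / 2^(n+1) = X/2/2^n := by
    rw [hpow, Nat.div_div_eq_div_mul]
  have e2' : Y / 2^(n+1) = Y/2/2^n := by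
    rw [hpow, Nat.div_div_eq_div_mul]
  have e3 : X % 2^(n+1) % 2 = X % 2 := Nat.mod_mod_of_dvd X ⟨2^n, hpow⟩
  have e3' : Y % 2^(n+1) % 2 = Y % 2 := Nat.mod_mod_of_dvd Y ⟨2^n, hpow⟩
  simp only [seedIter, nu2Iter, e1, e1', e2, e2', e3, e3']

lemma claim : ∀ n : ℕ, ∀ X Y : ℕ, X < 2^(n+1) → Y < 2^(n+1) →
    seedIter n X Y =
      (((if Vf ((X:ℤ) - 2^n) ((Y:ℤ) - 2^n) = -1 then 2 else 0) +
        (if (if Y = 0 then (-1:ℤ) else 1) * Hf ((X:ℤ) - 2^n) ((Y:ℤ) - 2^n) = -1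
          then 1 else 0) : Fin 4),
       (if Even ((X:ℤ) - 2^n) then (if Even ((Y:ℤ) - 2^n) then (0 : Fin 4) else 1)
        else (if Even ((Y:ℤ) - 2^n) then 2 else 3))) := by
  intro n
  induction n with
  | zero =>
    intro X Y hX hY
    norm_num at hX hY
    interval_cases X <;> interval_cases Y <;>
      norm_num [seedIter_zero, pfSeed, Vf_mone, Vf_zero, Hf_mone, Hf_zero,
        Int.even_iff] <;> decide
  | succ n ih =>
    intro X Y hX hY
    have hpn : (2:ℕ)^(n+1+1) = 2*2^(n+1) := by ring
    have hp1 : (2:ℤ)^(n+1) = 2*2^n := by ring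
    have hA : ((X:ℤ)) = 2*((X/2 : ℕ):ℤ) + ((X % 2 : ℕ):ℤ) := by
      exact_mod_cast (Nat.div_add_mod X 2).symm
    have hB : ((Y:ℤ)) = 2*((Y/2 : ℕ):ℤ) + ((Y % 2 : ℕ):ℤ) := by
      exact_mod_cast (Nat.div_add_mod Y 2).symm
    rw [seedIter_succ, ih (X/2) (Y/2) (by omega) (by omega)]
    rcases Nat.mod_two_eq_zero_or_one X with hdx | hdx <;>
      rcases Nat.mod_two_eq_zero_or_one Y with hdy | hdy <;>
      rw [hdx] at hA ⊢ <;> rw [hdy] at hB ⊢ <;> norm_num at hA hB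
    · -- dx = 0, dy = 0
      rw [show (X:ℤ) - 2^(n+1) = 2*(((X/2:ℕ):ℤ) - 2^n) by omega,
        show (Y:ℤ) - 2^(n+1) = 2*(((Y/2:ℕ):ℤ) - 2^n) by omega,
        Vf_even, Hf_even,
        show (2*(((Y/2:ℕ):ℤ) - 2^n))/2 = ((Y/2:ℕ):ℤ) - 2^n by omega,
        show (2*(((X/2:ℕ):ℤ) - 2^n))/2 = ((X/2:ℕ):ℤ) - 2^n by omega]
      have hY0 : (Y = 0) ↔ (Y/2 = 0) := by omega
      simp only [hY0]
      have hEx : Even (2*(((X/2:ℕ):ℤ) - 2^n)) := ⟨_, two_mul _⟩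
      have hEy : Even (2*(((Y/2:ℕ):ℤ) - 2^n)) := ⟨_, two_mul _⟩
      rw [if_pos hEx, if_pos hEy]
      rcases Vf_sign (((X/2:ℕ):ℤ) - 2^n) (((Y/2:ℕ):ℤ) - 2^n) with hv | hv <;>
        rcases Hf_sign (((X/2:ℕ):ℤ) - 2^n) (((Y/2:ℕ):ℤ) - 2^n) with hh | hh <;>
        rw [hv, hh] <;> push_cast <;>
        by_cases hY20 : Y/2 = 0 <;>
        by_cases px : Even ((X:ℤ)/2 - 2^n) <;>
        by_cases py : Even ((Y:ℤ)/2 - 2^n) <;>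
        norm_num [hY20, px, py, Int.even_add, Int.even_sub, Int.not_even_iff_odd] <;> decide
    · -- dx = 0, dy = 1
      rw [show (X:ℤ) - 2^(n+1) = 2*(((X/2:ℕ):ℤ) - 2^n) by omega,
        show (Y:ℤ) - 2^(n+1) = 2*(((Y/2:ℕ):ℤ) - 2^n) + 1 by omega,
        Vf_even,
        show (2*(((Y/2:ℕ):ℤ) - 2^n) + 1)/2 = ((Y/2:ℕ):ℤ) - 2^n by omega,
        Hf_odd,
        pm_eq (by rw [Int.even_iff, Int.even_iff]; omega :
          Even ((((Y/2:ℕ):ℤ) - 2^n) + 2*(((X/2:ℕ):ℤ) - 2^n)) ↔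
            Even (((Y/2:ℕ):ℤ) - 2^n))]
      have hY0 : ¬ (Y = 0) := by omega
      rw [if_neg hY0, one_mul]
      have hEx : Even (2*(((X/2:ℕ):ℤ) - 2^n)) := ⟨_, two_mul _⟩
      have hEy : ¬ Even (2*(((Y/2:ℕ):ℤ) - 2^n) + 1) := by
        rw [Int.even_iff]; omega
      rw [if_pos hEx, if_neg hEy]
      rcases Vf_sign (((X/2:ℕ):ℤ) - 2^n) (((Y/2:ℕ):ℤ) - 2^n) with hv | hv <;>
        rcases Hf_sign (((X/2:ℕ):ℤ) - 2^n) (((Y/2:ℕ):ℤ) - 2^n) with hh | hh <;>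
        rw [hv, hh] <;> push_cast <;>
        by_cases hY20 : Y/2 = 0 <;>
        by_cases px : Even ((X:ℤ)/2 - 2^n) <;>
        by_cases py : Even ((Y:ℤ)/2 - 2^n) <;>
        norm_num [hY20, px, py, Int.even_add, Int.even_sub, Int.not_even_iff_odd] <;> decide
    · -- dx = 1, dy = 0
      rw [show (X:ℤ) - 2^(n+1) = 2*(((X/2:ℕ):ℤ) - 2^n) + 1 by omega,
        show (Y:ℤ) - 2^(n+1) = 2*(((Y/2:ℕ):ℤ) - 2^n) by omega,
        Vf_odd,
        show (2*(((Y/2:ℕ):ℤ) - 2^n))/2 = ((Y/2:ℕ):ℤ) - 2^n by omega,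
        Hf_even,
        show (2*(((X/2:ℕ):ℤ) - 2^n) + 1)/2 = ((X/2:ℕ):ℤ) - 2^n by omega]
      have hY0 : (Y = 0) ↔ (Y/2 = 0) := by omega
      simp only [hY0]
      have hEx : ¬ Even (2*(((X/2:ℕ):ℤ) - 2^n) + 1) := by
        rw [Int.even_iff]; omega
      have hEy : Even (2*(((Y/2:ℕ):ℤ) - 2^n)) := ⟨_, two_mul _⟩
      rw [if_neg hEx, if_pos hEy]
      rcases Vf_sign (((X/2:ℕ):ℤ) - 2^n) (((Y/2:ℕ):ℤ) - 2^n) with hv | hv <;>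
        rcases Hf_sign (((X/2:ℕ):ℤ) - 2^n) (((Y/2:ℕ):ℤ) - 2^n) with hh | hh <;>
        rw [hv, hh] <;> push_cast <;>
        by_cases hY20 : Y/2 = 0 <;>
        by_cases px : Even ((X:ℤ)/2 - 2^n) <;>
        by_cases py : Even ((Y:ℤ)/2 - 2^n) <;>
        norm_num [hY20, px, py, Int.even_add, Int.even_sub, Int.not_even_iff_odd] <;> decide
    · -- dx = 1, dy = 1
      rw [show (X:ℤ) - 2^(n+1) = 2*(((X/2:ℕ):ℤ) - 2^n) + 1 by omega,
        show (Y:ℤ) - 2^(n+1) = 2*(((Y/2:ℕ):ℤ) - 2^n) + 1 by omega,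
        Vf_odd,
        show (2*(((Y/2:ℕ):ℤ) - 2^n) + 1)/2 = ((Y/2:ℕ):ℤ) - 2^n by omega,
        Hf_odd,
        pm_neg (by rw [Int.even_iff, Int.even_iff]; omega :
          Even ((((Y/2:ℕ):ℤ) - 2^n) + (2*(((X/2:ℕ):ℤ) - 2^n) + 1)) ↔
            ¬ Even (((Y/2:ℕ):ℤ) - 2^n))]
      have hY0 : ¬ (Y = 0) := by omega
      rw [if_neg hY0, one_mul]
      have hEx : ¬ Even (2*(((X/2:ℕ):ℤ) - 2^n) + 1) := by
        rw [Int.even_iff]; omega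
      have hEy : ¬ Even (2*(((Y/2:ℕ):ℤ) - 2^n) + 1) := by
        rw [Int.even_iff]; omega
      rw [if_neg hEx, if_neg hEy]
      rcases Vf_sign (((X/2:ℕ):ℤ) - 2^n) (((Y/2:ℕ):ℤ) - 2^n) with hv | hv <;>
        rcases Hf_sign (((X/2:ℕ):ℤ) - 2^n) (((Y/2:ℕ):ℤ) - 2^n) with hh | hh <;>
        rw [hv, hh] <;> push_cast <;>
        by_cases hY20 : Y/2 = 0 <;>
        by_cases px : Even ((X:ℤ)/2 - 2^n) <;>
        by_cases py : Even ((Y:ℤ)/2 - 2^n) <;>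
        norm_num [hY20, px, py, Int.even_add, Int.even_sub, Int.not_even_iff_odd] <;> decide

/-- `ν2` generates the 2-dimensional paperfolding structures: for `n ≥ 0` and
`−2^n ≤ x, y < 2^n`, the creases `v_{n+2}(x,y)` and `h_{n+2}(x,y)` are nonzero
and the entry of `ν2^n(Σ)` at position `(x + 2^n, y + 2^n)` is `b_{ij}` with
`i = 2u + w` (`u = 1` iff `v_{n+2}(x,y) = −1`, `w = 1` iff `h_{n+2}(x,y) = −1`)
and `j ∈ {0,1,2,3}` recording the parities of `(x, y)`. -/
theorem stmt12 (n : ℕ) (x y : ℤ)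
    (hx1 : -(2 ^ n) ≤ x) (hx2 : x < 2 ^ n)
    (hy1 : -(2 ^ n) ≤ y) (hy2 : y < 2 ^ n) :
    vPF (n + 2) x y ≠ 0 ∧ hPF (n + 2) x y ≠ 0 ∧
      seedIter n (x + 2 ^ n).toNat (y + 2 ^ n).toNat =
        (((if vPF (n + 2) x y = -1 then 2 else 0) +
            (if hPF (n + 2) x y = -1 then 1 else 0) : Fin 4),
         (if Even x then (if Even y then (0 : Fin 4) else 1)
          else (if Even y then 2 else 3))) := by
  have hK : (0:ℤ) < 2^n := by positivity
  have hp1 : (2:ℤ)^(n+1) = 2*2^n := by ring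
  have hcast : (((2:ℕ)^(n+1) : ℕ) : ℤ) = 2*2^n := by push_cast; ring
  have hv := lemA_v n x y (by omega) (by omega) (by omega) (by omega)
  have hh := lemA_h n x y (by omega) (by omega) (by omega) (by omega)
  have hc := claim n (x + 2^n).toNat (y + 2^n).toNat (by omega) (by omega)
  have hX' : (((x + 2^n).toNat : ℕ) : ℤ) - 2^n = x := by omega
  have hY' : (((y + 2^n).toNat : ℕ) : ℤ) - 2^n = y := by omega
  rw [hX', hY'] at hc
  have hcond : ((y + 2^n).toNat = 0) ↔ (y = 2^n ∨ y = -(2^n)) := by omega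
  simp only [hcond] at hc
  refine ⟨?_, ?_, ?_⟩
  · rw [hv]
    rcases Vf_sign x y with h | h <;> rw [h] <;> norm_num
  · rw [hh]
    rcases Hf_sign x y with h | h <;> rw [h] <;> split <;> norm_num
  · rw [hc, hv, hh]
end

section
/- Let S(n) be the 1-dimensional paperfolding patterns. Then: (a) for every n ≥ 1 and every integer x with |x| < 2^(n−1), the crease of S(n+1) at position 2x equals the crease of S(n) at position x; and (b) for every n ≥ 2 and every integer x with −2^(n−1) ≤ x < 2^(n−1), the crease of S(n+1) at position 2x+1 equals −1 if x is even and +1 if x is odd. -/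
/-- Reflection of a word of creases: reverse and negate every sign. -/
def rPF (w : List ℤ) : List ℤ := (w.map (fun s => -s)).reverse

/-- The 1-dimensional paperfolding patterns: `S(0) = []` and
`S(n+1) = r(S(n)) ++ [+1] ++ S(n)`; `S(n)` has length `2^n − 1` and its entry
at 0-based index `m` is the crease sign at integer position
`x = m − 2^(n−1) + 1`. -/
def SPF : ℕ → List ℤ
  | 0 => []
  | n + 1 => rPF (SPF n) ++ [1] ++ SPF n

/-- The paperfolding sign function: strip factors of 2, then look mod 4. -/
def dPF (j : ℕ) : ℤ :=
  if h : j % 2 = 0 ∧ j ≠ 0 then dPF (j / 2)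
  else if j % 4 = 1 then 1 else -1
termination_by j
decreasing_by exact Nat.div_lt_self (Nat.pos_of_ne_zero h.2) one_lt_two

lemma dPF_double (j : ℕ) (h : j ≠ 0) : dPF (2 * j) = dPF j := by
  rw [dPF]
  simp [Nat.mul_div_cancel_left, h]

lemma dPF_odd (j : ℕ) (h : j % 2 = 1) :
    dPF j = if j % 4 = 1 then 1 else -1 := by
  rw [dPF]; simp [h]

lemma dPF_pow (k : ℕ) : dPF (2 ^ k) = 1 := by
  induction k with
  | zero => rw [dPF]; norm_num
  | succ k ih => rw [pow_succ, mul_comm, dPF_double _ (by positivity)]; exact ih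

lemma dPF_flip : ∀ n : ℕ, 1 ≤ n → ∀ j : ℕ, 1 ≤ j → j < 2 ^ n →
    dPF (2 ^ (n + 1) - j) = -dPF j := by
  intro n
  induction n with
  | zero => omega
  | succ n ih =>
    intro _ j hj1 hj2
    rcases Nat.even_or_odd j with he | ho
    · obtain ⟨j', rfl⟩ := he
      have hj' : j' ≠ 0 := by omega
      have hn : 1 ≤ n := by
        rcases Nat.eq_zero_or_pos n with rfl | h
        · simp at hj2; omega
        · exact h
      have h1 : 2 ^ (n + 1 + 1) - (j' + j') = 2 * (2 ^ (n + 1) - j') := by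
        have : 2 ^ (n + 1 + 1) = 2 * 2 ^ (n + 1) := by ring
        omega
      rw [h1, dPF_double _ (by omega), show j' + j' = 2 * j' by ring,
        dPF_double _ hj']
      exact ih hn j' (by omega) (by omega)
    · have h4 : (4 : ℕ) ∣ 2 ^ (n + 1 + 1) := by
        have : 2 ^ (n + 1 + 1) = 4 * 2 ^ n := by ring
        omega
      have hjo : j % 2 = 1 := Nat.odd_iff.mp ho
      have hko : (2 ^ (n + 1 + 1) - j) % 2 = 1 := by omega
      rw [dPF_odd _ hjo, dPF_odd _ hko]
      have hj4 : j % 4 = 1 ∨ j % 4 = 3 := by omega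
      have hle : j ≤ 2 ^ (n + 1 + 1) := by
        have : 2 ^ (n+1) ≤ 2 ^ (n+1+1) := Nat.pow_le_pow_right (by norm_num) (by omega)
        omega
      rcases hj4 with h | h
      · have : (2 ^ (n + 1 + 1) - j) % 4 = 3 := by omega
        simp [h, this]
      · have : (2 ^ (n + 1 + 1) - j) % 4 = 1 := by omega
        simp [h, this]

lemma SPF_length (n : ℕ) : (SPF n).length = 2 ^ n - 1 := by
  induction n with
  | zero => simp [SPF]
  | succ n ih =>
    have : 1 ≤ 2 ^ n := Nat.one_le_two_pow
    simp [SPF, rPF, ih, pow_succ]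
    omega

/-- The explicit formula: the entry of `S(n)` at index `m` is `dPF (2^n − 1 − m)`. -/
lemma SPF_get : ∀ n : ℕ, ∀ m : ℕ, m < 2 ^ n - 1 →
    (SPF n)[m]? = some (dPF (2 ^ n - 1 - m)) := by
  intro n
  induction n with
  | zero => intro m hm; simp at hm
  | succ n ih =>
    intro m hm
    have h1 : 1 ≤ 2 ^ n := Nat.one_le_two_pow
    have hp : 2 ^ (n + 1) = 2 * 2 ^ n := by ring
    have hlr : (rPF (SPF n)).length = 2 ^ n - 1 := by
      simp [rPF, SPF_length]
    rcases lt_trichotomy m (2 ^ n - 1) with h | h | h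
    · -- left half
      have hn1 : 1 ≤ n := by
        rcases Nat.eq_zero_or_pos n with rfl | h'
        · omega
        · exact h'
      rw [show SPF (n+1) = rPF (SPF n) ++ ([1] ++ SPF n) by simp [SPF]]
      rw [List.getElem?_append]
      simp only [hlr, h, if_true]
      rw [rPF, List.getElem?_reverse (by simp [SPF_length]; omega), List.getElem?_map]
      have hlen : ((SPF n).map fun s => -s).length = 2 ^ n - 1 := by simp [SPF_length]
      rw [hlen, ih (2 ^ n - 1 - 1 - m) (by omega)]
      have e1 : 2 ^ n - 1 - (2 ^ n - 1 - 1 - m) = m + 1 := by omega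
      rw [e1]
      have e2 : 2 ^ (n + 1) - 1 - m = 2 ^ (n + 1) - (m + 1) := by omega
      rw [e2, dPF_flip n hn1 (m + 1) (by omega) (by omega)]
      simp
    · -- center
      subst h
      rw [show SPF (n+1) = rPF (SPF n) ++ ([1] ++ SPF n) by simp [SPF]]
      rw [List.getElem?_append_right (by omega)]
      rw [hlr]
      simp only [Nat.sub_self]
      have e : 2 ^ (n + 1) - 1 - (2 ^ n - 1) = 2 ^ n := by omega
      rw [e, dPF_pow]
      simp
    · -- right half
      rw [show SPF (n+1) = (rPF (SPF n) ++ [1]) ++ SPF n by simp [SPF]]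
      rw [List.getElem?_append_right (by simp [hlr]; omega)]
      have hl2 : (rPF (SPF n) ++ [1]).length = 2 ^ n := by simp [hlr]; omega
      rw [hl2, ih (m - 2 ^ n) (by omega)]
      congr 2
      omega

/-- (a) For `n ≥ 1` and `|x| < 2^(n−1)`, the crease of `S(n+1)` at position
`2x` equals the crease of `S(n)` at position `x`; (b) for `n ≥ 2` and
`−2^(n−1) ≤ x < 2^(n−1)`, the crease of `S(n+1)` at position `2x + 1` is `−1`
if `x` is even and `+1` if `x` is odd.  (The crease of `S(m)` at position `p`
is the entry of the word `S(m)` at 0-based index `p + 2^(m−1) − 1`.) -/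
theorem stmt13 :
    (∀ n : ℕ, 1 ≤ n → ∀ x : ℤ, |x| < 2 ^ (n - 1) →
      (SPF (n + 1))[(2 * x + 2 ^ n - 1).toNat]? =
        (SPF n)[(x + 2 ^ (n - 1) - 1).toNat]?) ∧
    (∀ n : ℕ, 2 ≤ n → ∀ x : ℤ, -(2 ^ (n - 1)) ≤ x → x < 2 ^ (n - 1) →
      (SPF (n + 1))[(2 * x + 1 + 2 ^ n - 1).toNat]? =
        some (if Even x then -1 else 1)) := by
  constructor
  · -- part (a)
    intro n hn x hx
    obtain ⟨k, rfl⟩ : ∃ k, n = k + 1 := ⟨n - 1, by omega⟩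
    simp only [Nat.add_sub_cancel] at hx ⊢
    rw [abs_lt] at hx
    have c0 : (2 : ℤ) ^ k = ((2 ^ k : ℕ) : ℤ) := by push_cast; ring
    have c1 : (2 : ℤ) ^ (k + 1) = ((2 * 2 ^ k : ℕ) : ℤ) := by push_cast; ring
    rw [c0] at hx
    rw [c0, c1]
    have hN : 1 ≤ (2 : ℕ) ^ k := Nat.one_le_two_pow
    set a := (x + ((2 ^ k : ℕ) : ℤ) - 1).toNat with hadef
    set b := (2 * x + ((2 * 2 ^ k : ℕ) : ℤ) - 1).toNat with hbdef
    have haz : (a : ℤ) = x + ((2 ^ k : ℕ) : ℤ) - 1 :=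
      Int.toNat_of_nonneg (by push_cast; omega)
    have hbz : (b : ℤ) = 2 * x + ((2 * 2 ^ k : ℕ) : ℤ) - 1 :=
      Int.toNat_of_nonneg (by push_cast; omega)
    have haa : a < 2 ^ (k + 1) - 1 := by
      have h2 : (2 : ℕ) ^ (k + 1) = 2 * 2 ^ k := by ring
      push_cast at haz
      omega
    have hbb : b < 2 ^ (k + 1 + 1) - 1 := by
      have h4 : (2 : ℕ) ^ (k + 1 + 1) = 4 * 2 ^ k := by ring
      push_cast at hbz
      omega
    rw [SPF_get _ b hbb, SPF_get _ a haa]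
    have e : 2 ^ (k + 1 + 1) - 1 - b = 2 * (2 ^ (k + 1) - 1 - a) := by
      have h2 : (2 : ℕ) ^ (k + 1) = 2 * 2 ^ k := by ring
      have h4 : (2 : ℕ) ^ (k + 1 + 1) = 4 * 2 ^ k := by ring
      push_cast at haz hbz
      omega
    rw [e, dPF_double]
    have h2 : (2 : ℕ) ^ (k + 1) = 2 * 2 ^ k := by ring
    push_cast at haz
    omega
  · -- part (b)
    intro n hn x hx1 hx2
    obtain ⟨k, rfl⟩ : ∃ k, n = k + 2 := ⟨n - 2, by omega⟩
    simp only [show k + 2 - 1 = k + 1 from rfl] at hx1 hx2 ⊢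
    have c1 : (2 : ℤ) ^ (k + 1) = ((2 * 2 ^ k : ℕ) : ℤ) := by push_cast; ring
    have c2 : (2 : ℤ) ^ (k + 2) = ((4 * 2 ^ k : ℕ) : ℤ) := by push_cast; ring
    rw [c1] at hx1 hx2
    rw [c2]
    have hN : 1 ≤ (2 : ℕ) ^ k := Nat.one_le_two_pow
    set b := (2 * x + 1 + ((4 * 2 ^ k : ℕ) : ℤ) - 1).toNat with hbdef
    have hbz : (b : ℤ) = 2 * x + 1 + ((4 * 2 ^ k : ℕ) : ℤ) - 1 :=
      Int.toNat_of_nonneg (by push_cast at hx1 ⊢; omega)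
    push_cast at hbz hx1 hx2
    have hbb : b < 2 ^ (k + 2 + 1) - 1 := by
      have h8 : (2 : ℕ) ^ (k + 2 + 1) = 8 * 2 ^ k := by ring
      omega
    rw [SPF_get _ b hbb]
    have h8 : (2 : ℕ) ^ (k + 2 + 1) = 8 * 2 ^ k := by ring
    have hodd : (2 ^ (k + 2 + 1) - 1 - b) % 2 = 1 := by omega
    rw [dPF_odd _ hodd]
    by_cases hev : Even x
    · have hx0 : x % 2 = 0 := Int.even_iff.mp hev
      have h4 : (2 ^ (k + 2 + 1) - 1 - b) % 4 = 3 := by omega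
      simp [hev, h4]
    · have hx0 : x % 2 = 1 := Int.odd_iff.mp (Int.not_even_iff_odd.mp hev)
      have h4 : (2 ^ (k + 2 + 1) - 1 - b) % 4 = 1 := by omega
      simp [hev, h4]
end

section
/- Let v_n, h_n encode the 2-dimensional paperfolding patterns S_2(n). Then for every n ≥ 2 and all integers (x,y) with −2^(n−1) ≤ x < 2^(n−1) and −2^(n−1) ≤ y < 2^(n−1): (a) (doubling) v_{n+1}(2x, 2y) = v_{n+1}(2x, 2y+1) = v_n(x,y) and h_{n+1}(2x, 2y) = h_{n+1}(2x+1, 2y) = h_n(x,y); and (b) (inserted creases) v_{n+1}(2x+1, 2y) = v_{n+1}(2x+1, 2y+1) = (−1)^(e(x)+e(y)), h_{n+1}(2x, 2y+1) = −(−1)^(e(y)), and h_{n+1}(2x+1, 2y+1) = (−1)^(e(y)), where e(t) = 1 if t is even and e(t) = 0 if t is odd. -/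
/-- `e(t) = 1` if `t` is even, `e(t) = 0` if `t` is odd. -/
def epar (t : ℤ) : ℕ := if Even t then 1 else 0

section PFhelpers

private lemma vPF_pp (n : ℕ) (hn : 1 ≤ n) (x y : ℤ) (hx : 0 < x) (hy : 0 ≤ y) :
    vPF (n + 1) x y = vPF n (x - 2 ^ (n - 1)) (y - 2 ^ (n - 1)) := by
  obtain ⟨m, rfl⟩ : ∃ m, n = m + 1 := ⟨n - 1, by omega⟩
  simp only [vPF, if_neg hx.ne', if_neg (Nat.succ_ne_zero m), if_pos hx, if_pos hy]
  ring_nf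

private lemma vPF_pm (n : ℕ) (hn : 1 ≤ n) (x y : ℤ) (hx : 0 < x) (hy : y < 0) :
    vPF (n + 1) x y = -vPF n (x - 2 ^ (n - 1)) (-(y + 2 ^ (n - 1)) - 1) := by
  obtain ⟨m, rfl⟩ : ∃ m, n = m + 1 := ⟨n - 1, by omega⟩
  simp only [vPF, if_neg hx.ne', if_neg (Nat.succ_ne_zero m), if_pos hx,
    if_neg (by omega : ¬(0:ℤ) ≤ y)]
  ring_nf

private lemma vPF_mp (n : ℕ) (hn : 1 ≤ n) (x y : ℤ) (hx : x < 0) (hy : 0 ≤ y) :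
    vPF (n + 1) x y = -vPF n (-(x + 2 ^ (n - 1))) (y - 2 ^ (n - 1)) := by
  obtain ⟨m, rfl⟩ : ∃ m, n = m + 1 := ⟨n - 1, by omega⟩
  simp only [vPF, if_neg (by omega : ¬x = 0), if_neg (Nat.succ_ne_zero m),
    if_neg (by omega : ¬(0:ℤ) < x), if_pos hy]
  ring_nf

private lemma vPF_mm (n : ℕ) (hn : 1 ≤ n) (x y : ℤ) (hx : x < 0) (hy : y < 0) :
    vPF (n + 1) x y = vPF n (-(x + 2 ^ (n - 1))) (-(y + 2 ^ (n - 1)) - 1) := by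
  obtain ⟨m, rfl⟩ : ∃ m, n = m + 1 := ⟨n - 1, by omega⟩
  simp only [vPF, if_neg (by omega : ¬x = 0), if_neg (Nat.succ_ne_zero m),
    if_neg (by omega : ¬(0:ℤ) < x), if_neg (by omega : ¬(0:ℤ) ≤ y)]
  ring_nf

private lemma vPF_central (n : ℕ) (y : ℤ) :
    vPF (n + 1) 0 y = if -(2 ^ n : ℤ) ≤ y ∧ y ≤ 2 ^ n - 1 then 1 else 0 := by
  simp [vPF]

private lemma hPF_pp (n : ℕ) (hn : 1 ≤ n) (x y : ℤ) (hx : 0 ≤ x) (hy : 0 < y) :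
    hPF (n + 1) x y = hPF n (x - 2 ^ (n - 1)) (y - 2 ^ (n - 1)) := by
  obtain ⟨m, rfl⟩ : ∃ m, n = m + 1 := ⟨n - 1, by omega⟩
  simp only [hPF, if_neg hy.ne', if_neg (Nat.succ_ne_zero m), if_pos hx, if_pos hy]
  ring_nf

private lemma hPF_pm (n : ℕ) (hn : 1 ≤ n) (x y : ℤ) (hx : 0 ≤ x) (hy : y < 0) :
    hPF (n + 1) x y = -hPF n (x - 2 ^ (n - 1)) (-(y + 2 ^ (n - 1))) := by
  obtain ⟨m, rfl⟩ : ∃ m, n = m + 1 := ⟨n - 1, by omega⟩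
  simp only [hPF, if_neg (by omega : ¬y = 0), if_neg (Nat.succ_ne_zero m), if_pos hx,
    if_neg (by omega : ¬(0:ℤ) < y)]
  ring_nf

private lemma hPF_mp (n : ℕ) (hn : 1 ≤ n) (x y : ℤ) (hx : x < 0) (hy : 0 < y) :
    hPF (n + 1) x y = -hPF n (-(x + 2 ^ (n - 1)) - 1) (y - 2 ^ (n - 1)) := by
  obtain ⟨m, rfl⟩ : ∃ m, n = m + 1 := ⟨n - 1, by omega⟩
  simp only [hPF, if_neg hy.ne', if_neg (Nat.succ_ne_zero m),
    if_neg (by omega : ¬(0:ℤ) ≤ x), if_pos hy]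
  ring_nf

private lemma hPF_mm (n : ℕ) (hn : 1 ≤ n) (x y : ℤ) (hx : x < 0) (hy : y < 0) :
    hPF (n + 1) x y = hPF n (-(x + 2 ^ (n - 1)) - 1) (-(y + 2 ^ (n - 1))) := by
  obtain ⟨m, rfl⟩ : ∃ m, n = m + 1 := ⟨n - 1, by omega⟩
  simp only [hPF, if_neg (by omega : ¬y = 0), if_neg (Nat.succ_ne_zero m),
    if_neg (by omega : ¬(0:ℤ) ≤ x), if_neg (by omega : ¬(0:ℤ) < y)]
  ring_nf

private lemma hPF_central (n : ℕ) (x : ℤ) :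
    hPF (n + 1) x 0 = if 0 ≤ x ∧ x ≤ 2 ^ n - 1 then 1
      else if -(2 ^ n : ℤ) ≤ x ∧ x ≤ -1 then -1 else 0 := by
  simp [hPF]

private lemma vPF_ge (n : ℕ) (x y : ℤ) (h : (2:ℤ) ^ (n - 1) ≤ x) : vPF n x y = 0 := by
  induction n generalizing x y with
  | zero => rfl
  | succ m ih =>
    match m with
    | 0 => simp only [vPF]; rw [if_neg (by simp at h; omega)]; simp
    | k + 1 =>
      have hx : 0 < x := lt_of_lt_of_le (by positivity) h
      rcases le_or_gt 0 y with hy | hy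
      · rw [vPF_pp _ (by omega) _ _ hx hy, ih]
        have : (2:ℤ)^(k+1) = 2^k + 2^k := by ring
        simp only [Nat.add_sub_cancel] at h ⊢
        omega
      · rw [vPF_pm _ (by omega) _ _ hx hy, ih, neg_zero]
        have : (2:ℤ)^(k+1) = 2^k + 2^k := by ring
        simp only [Nat.add_sub_cancel] at h ⊢
        omega

private lemma hPF_ge (n : ℕ) (x y : ℤ) (h : (2:ℤ) ^ (n - 1) ≤ y) : hPF n x y = 0 := by
  induction n generalizing x y with
  | zero => rfl
  | succ m ih =>
    match m with
    | 0 => simp only [hPF]; rw [if_neg (by simp at h; omega)]; simp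
    | k + 1 =>
      have hy : 0 < y := lt_of_lt_of_le (by positivity) h
      rcases le_or_gt 0 x with hx | hx
      · rw [hPF_pp _ (by omega) _ _ hx hy, ih]
        have : (2:ℤ)^(k+1) = 2^k + 2^k := by ring
        simp only [Nat.add_sub_cancel] at h ⊢
        omega
      · rw [hPF_mp _ (by omega) _ _ hx hy, ih, neg_zero]
        have : (2:ℤ)^(k+1) = 2^k + 2^k := by ring
        simp only [Nat.add_sub_cancel] at h ⊢
        omega

private lemma vPF_le (n : ℕ) (x y : ℤ) (h : x ≤ -((2:ℤ) ^ (n - 1))) : vPF n x y = 0 := by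
  match n with
  | 0 => rfl
  | 1 =>
    have hx : ¬ x = 0 := by norm_num at h; omega
    simp only [vPF, if_neg hx]; simp
  | k + 2 =>
    have hk : (2:ℤ)^(k+1) = 2*2^k := by ring
    have h' : x ≤ -((2:ℤ)^(k+1)) := h
    have hp : (0:ℤ) < 2^k := by positivity
    have hx : x < 0 := by omega
    rcases le_or_gt 0 y with hy | hy
    · rw [vPF_mp (k+1) (by omega) x y hx hy,
        vPF_ge (k+1) (-(x + 2 ^ (k + 1 - 1))) (y - 2 ^ (k + 1 - 1))
          (by simp only [Nat.add_sub_cancel]; omega), neg_zero]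
    · rw [vPF_mm (k+1) (by omega) x y hx hy,
        vPF_ge (k+1) (-(x + 2 ^ (k + 1 - 1))) (-(y + 2 ^ (k + 1 - 1)) - 1)
          (by simp only [Nat.add_sub_cancel]; omega)]

private lemma hPF_le (n : ℕ) (x y : ℤ) (h : y ≤ -((2:ℤ) ^ (n - 1))) : hPF n x y = 0 := by
  match n with
  | 0 => rfl
  | 1 =>
    have hy : ¬ y = 0 := by norm_num at h; omega
    simp only [hPF, if_neg hy]; simp
  | k + 2 =>
    have hk : (2:ℤ)^(k+1) = 2*2^k := by ring
    have h' : y ≤ -((2:ℤ)^(k+1)) := h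
    have hp : (0:ℤ) < 2^k := by positivity
    have hy : y < 0 := by omega
    rcases le_or_gt 0 x with hx | hx
    · rw [hPF_pm (k+1) (by omega) x y hx hy,
        hPF_ge (k+1) (x - 2 ^ (k + 1 - 1)) (-(y + 2 ^ (k + 1 - 1)))
          (by simp only [Nat.add_sub_cancel]; omega), neg_zero]
    · rw [hPF_mm (k+1) (by omega) x y hx hy,
        hPF_ge (k+1) (-(x + 2 ^ (k + 1 - 1)) - 1) (-(y + 2 ^ (k + 1 - 1)))
          (by simp only [Nat.add_sub_cancel]; omega)]

private lemma neg_one_pow_epar_emod (a : ℤ) :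
    (-1:ℤ) ^ (epar a) = if a % 2 = 0 then -1 else 1 := by
  unfold epar
  simp only [Int.even_iff]
  split <;> norm_num

/-- The full statement of the doubling/insertion lemma at level `n`. -/
private def Stmt (n : ℕ) (x y : ℤ) : Prop :=
    (vPF (n + 1) (2 * x) (2 * y) = vPF n x y ∧
     vPF (n + 1) (2 * x) (2 * y + 1) = vPF n x y ∧
     hPF (n + 1) (2 * x) (2 * y) = hPF n x y ∧
     hPF (n + 1) (2 * x + 1) (2 * y) = hPF n x y) ∧
    (vPF (n + 1) (2 * x + 1) (2 * y) = (-1 : ℤ) ^ (epar x + epar y) ∧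
     vPF (n + 1) (2 * x + 1) (2 * y + 1) = (-1 : ℤ) ^ (epar x + epar y) ∧
     hPF (n + 1) (2 * x) (2 * y + 1) = -(-1 : ℤ) ^ (epar y) ∧
     hPF (n + 1) (2 * x + 1) (2 * y + 1) = (-1 : ℤ) ^ (epar y))

private lemma pfBase (x y : ℤ) (hx1 : -(2 ^ (2 - 1) : ℤ) ≤ x) (hx2 : x < 2 ^ (2 - 1))
    (hy1 : -(2 ^ (2 - 1) : ℤ) ≤ y) (hy2 : y < 2 ^ (2 - 1)) : Stmt 2 x y := by
  norm_num at hx1 hx2 hy1 hy2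
  unfold Stmt
  interval_cases x <;> interval_cases y <;>
    exact ⟨⟨by decide, by decide, by decide, by decide⟩,
           by decide, by decide, by decide, by decide⟩

private lemma pfStep (m : ℕ) (hm : 2 ≤ m)
    (ih : ∀ a b : ℤ, -(2 ^ (m - 1) : ℤ) ≤ a → a < 2 ^ (m - 1) →
      -(2 ^ (m - 1) : ℤ) ≤ b → b < 2 ^ (m - 1) → Stmt m a b)
    (x y : ℤ) (hx1 : -(2 ^ m : ℤ) ≤ x) (hx2 : x < 2 ^ m)
    (hy1 : -(2 ^ m : ℤ) ≤ y) (hy2 : y < 2 ^ m) : Stmt (m + 1) x y := by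
  have hm1 : 1 ≤ m := by omega
  have e1 : (2:ℤ) ^ m = 2 * 2 ^ (m - 1) := by
    conv_lhs => rw [show m = (m - 1) + 1 by omega]
    rw [pow_succ]; ring
  have e2 : (2:ℤ) ^ (m + 1) = 4 * 2 ^ (m - 1) := by rw [pow_succ, e1]; ring
  have e2' : (2:ℤ) ^ (m + 1 + 1 - 1) = 4 * 2 ^ (m - 1) := e2
  have e1' : (2:ℤ) ^ (m + 1 - 1) = 2 * 2 ^ (m - 1) := e1
  have hp0 : (0:ℤ) < 2 ^ (m - 1) := by positivity
  have hpe : (2:ℤ) ^ (m - 1) % 2 = 0 := by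
    rw [show m - 1 = (m - 2) + 1 by omega, pow_succ]
    exact Int.mul_emod_left _ _
  unfold Stmt
  refine ⟨⟨?_, ?_, ?_, ?_⟩, ?_, ?_, ?_, ?_⟩
  · -- A1 : vPF (m+2) (2x) (2y) = vPF (m+1) x y
    rcases lt_trichotomy x 0 with hx | hx | hx
    · rcases eq_or_lt_of_le hx1 with hxb | hxb
      · rw [vPF_le (m+1+1) (2*x) (2*y) (by omega),
            vPF_le (m+1) x y (by omega)]
      · rcases le_or_gt 0 y with hy | hy
        · rw [vPF_mp (m+1) (by omega) (2*x) (2*y) (by omega) (by omega)]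
          simp only [Nat.add_sub_cancel]
          rw [show -(2*x + 2^m) = 2*(-(x + 2^(m-1))) by rw [e1]; ring,
              show 2*y - 2^m = 2*(y - 2^(m-1)) by rw [e1]; ring,
              (ih (-(x + 2^(m-1))) (y - 2^(m-1)) (by omega) (by omega) (by omega) (by omega)).1.1,
              vPF_mp m hm1 x y hx hy]
        · rw [vPF_mm (m+1) (by omega) (2*x) (2*y) (by omega) (by omega)]
          simp only [Nat.add_sub_cancel]
          rw [show -(2*x + 2^m) = 2*(-(x + 2^(m-1))) by rw [e1]; ring,
              show -(2*y + 2^m) - 1 = 2*(-(y + 2^(m-1)) - 1) + 1 by rw [e1]; ring,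
              (ih (-(x + 2^(m-1))) (-(y + 2^(m-1)) - 1) (by omega) (by omega) (by omega) (by omega)).1.2.1,
              vPF_mm m hm1 x y hx hy]
    · subst hx
      simp only [mul_zero]
      rw [vPF_central, vPF_central,
          if_pos (show -(2^(m+1):ℤ) ≤ 2*y ∧ 2*y ≤ 2^(m+1) - 1 by omega),
          if_pos (show -(2^m:ℤ) ≤ y ∧ y ≤ 2^m - 1 by omega)]
    · rcases le_or_gt 0 y with hy | hy
      · rw [vPF_pp (m+1) (by omega) (2*x) (2*y) (by omega) (by omega)]
        simp only [Nat.add_sub_cancel]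
        rw [show 2*x - 2^m = 2*(x - 2^(m-1)) by rw [e1]; ring,
            show 2*y - 2^m = 2*(y - 2^(m-1)) by rw [e1]; ring,
            (ih (x - 2^(m-1)) (y - 2^(m-1)) (by omega) (by omega) (by omega) (by omega)).1.1,
            vPF_pp m hm1 x y hx hy]
      · rw [vPF_pm (m+1) (by omega) (2*x) (2*y) (by omega) (by omega)]
        simp only [Nat.add_sub_cancel]
        rw [show 2*x - 2^m = 2*(x - 2^(m-1)) by rw [e1]; ring,
            show -(2*y + 2^m) - 1 = 2*(-(y + 2^(m-1)) - 1) + 1 by rw [e1]; ring,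
            (ih (x - 2^(m-1)) (-(y + 2^(m-1)) - 1) (by omega) (by omega) (by omega) (by omega)).1.2.1,
            vPF_pm m hm1 x y hx hy]
  · -- A2 : vPF (m+2) (2x) (2y+1) = vPF (m+1) x y
    rcases lt_trichotomy x 0 with hx | hx | hx
    · rcases eq_or_lt_of_le hx1 with hxb | hxb
      · rw [vPF_le (m+1+1) (2*x) (2*y+1) (by omega),
            vPF_le (m+1) x y (by omega)]
      · rcases le_or_gt 0 y with hy | hy
        · rw [vPF_mp (m+1) (by omega) (2*x) (2*y+1) (by omega) (by omega)]
          simp only [Nat.add_sub_cancel]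
          rw [show -(2*x + 2^m) = 2*(-(x + 2^(m-1))) by rw [e1]; ring,
              show 2*y + 1 - 2^m = 2*(y - 2^(m-1)) + 1 by rw [e1]; ring,
              (ih (-(x + 2^(m-1))) (y - 2^(m-1)) (by omega) (by omega) (by omega) (by omega)).1.2.1,
              vPF_mp m hm1 x y hx hy]
        · rw [vPF_mm (m+1) (by omega) (2*x) (2*y+1) (by omega) (by omega)]
          simp only [Nat.add_sub_cancel]
          rw [show -(2*x + 2^m) = 2*(-(x + 2^(m-1))) by rw [e1]; ring,
              show -(2*y + 1 + 2^m) - 1 = 2*(-(y + 2^(m-1)) - 1) by rw [e1]; ring,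
              (ih (-(x + 2^(m-1))) (-(y + 2^(m-1)) - 1) (by omega) (by omega) (by omega) (by omega)).1.1,
              vPF_mm m hm1 x y hx hy]
    · subst hx
      simp only [mul_zero]
      rw [vPF_central, vPF_central,
          if_pos (show -(2^(m+1):ℤ) ≤ 2*y + 1 ∧ 2*y + 1 ≤ 2^(m+1) - 1 by omega),
          if_pos (show -(2^m:ℤ) ≤ y ∧ y ≤ 2^m - 1 by omega)]
    · rcases le_or_gt 0 y with hy | hy
      · rw [vPF_pp (m+1) (by omega) (2*x) (2*y+1) (by omega) (by omega)]
        simp only [Nat.add_sub_cancel]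
        rw [show 2*x - 2^m = 2*(x - 2^(m-1)) by rw [e1]; ring,
            show 2*y + 1 - 2^m = 2*(y - 2^(m-1)) + 1 by rw [e1]; ring,
            (ih (x - 2^(m-1)) (y - 2^(m-1)) (by omega) (by omega) (by omega) (by omega)).1.2.1,
            vPF_pp m hm1 x y hx hy]
      · rw [vPF_pm (m+1) (by omega) (2*x) (2*y+1) (by omega) (by omega)]
        simp only [Nat.add_sub_cancel]
        rw [show 2*x - 2^m = 2*(x - 2^(m-1)) by rw [e1]; ring,
            show -(2*y + 1 + 2^m) - 1 = 2*(-(y + 2^(m-1)) - 1) by rw [e1]; ring,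
            (ih (x - 2^(m-1)) (-(y + 2^(m-1)) - 1) (by omega) (by omega) (by omega) (by omega)).1.1,
            vPF_pm m hm1 x y hx hy]
  · -- A3 : hPF (m+2) (2x) (2y) = hPF (m+1) x y
    rcases lt_trichotomy y 0 with hy | hy | hy
    · rcases eq_or_lt_of_le hy1 with hyb | hyb
      · rw [hPF_le (m+1+1) (2*x) (2*y) (by omega),
            hPF_le (m+1) x y (by omega)]
      · rcases le_or_gt 0 x with hx | hx
        · rw [hPF_pm (m+1) (by omega) (2*x) (2*y) (by omega) (by omega)]
          simp only [Nat.add_sub_cancel]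
          rw [show 2*x - 2^m = 2*(x - 2^(m-1)) by rw [e1]; ring,
              show -(2*y + 2^m) = 2*(-(y + 2^(m-1))) by rw [e1]; ring,
              (ih (x - 2^(m-1)) (-(y + 2^(m-1))) (by omega) (by omega) (by omega) (by omega)).1.2.2.1,
              hPF_pm m hm1 x y hx hy]
        · rw [hPF_mm (m+1) (by omega) (2*x) (2*y) (by omega) (by omega)]
          simp only [Nat.add_sub_cancel]
          rw [show -(2*x + 2^m) - 1 = 2*(-(x + 2^(m-1)) - 1) + 1 by rw [e1]; ring,
              show -(2*y + 2^m) = 2*(-(y + 2^(m-1))) by rw [e1]; ring,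
              (ih (-(x + 2^(m-1)) - 1) (-(y + 2^(m-1))) (by omega) (by omega) (by omega) (by omega)).1.2.2.2,
              hPF_mm m hm1 x y hx hy]
    · subst hy
      simp only [mul_zero]
      rcases le_or_gt 0 x with hx | hx
      · rw [hPF_central, hPF_central,
            if_pos (show 0 ≤ 2*x ∧ 2*x ≤ 2^(m+1) - 1 by omega),
            if_pos (show 0 ≤ x ∧ x ≤ 2^m - 1 by omega)]
      · rw [hPF_central, hPF_central,
            if_neg (show ¬(0 ≤ 2*x ∧ 2*x ≤ 2^(m+1) - 1) by omega),
            if_neg (show ¬(0 ≤ x ∧ x ≤ 2^m - 1) by omega),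
            if_pos (show -(2^(m+1):ℤ) ≤ 2*x ∧ 2*x ≤ -1 by omega),
            if_pos (show -(2^m:ℤ) ≤ x ∧ x ≤ -1 by omega)]
    · rcases le_or_gt 0 x with hx | hx
      · rw [hPF_pp (m+1) (by omega) (2*x) (2*y) (by omega) (by omega)]
        simp only [Nat.add_sub_cancel]
        rw [show 2*x - 2^m = 2*(x - 2^(m-1)) by rw [e1]; ring,
            show 2*y - 2^m = 2*(y - 2^(m-1)) by rw [e1]; ring,
            (ih (x - 2^(m-1)) (y - 2^(m-1)) (by omega) (by omega) (by omega) (by omega)).1.2.2.1,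
            hPF_pp m hm1 x y hx hy]
      · rw [hPF_mp (m+1) (by omega) (2*x) (2*y) (by omega) (by omega)]
        simp only [Nat.add_sub_cancel]
        rw [show -(2*x + 2^m) - 1 = 2*(-(x + 2^(m-1)) - 1) + 1 by rw [e1]; ring,
            show 2*y - 2^m = 2*(y - 2^(m-1)) by rw [e1]; ring,
            (ih (-(x + 2^(m-1)) - 1) (y - 2^(m-1)) (by omega) (by omega) (by omega) (by omega)).1.2.2.2,
            hPF_mp m hm1 x y hx hy]
  · -- A4 : hPF (m+2) (2x+1) (2y) = hPF (m+1) x y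
    rcases lt_trichotomy y 0 with hy | hy | hy
    · rcases eq_or_lt_of_le hy1 with hyb | hyb
      · rw [hPF_le (m+1+1) (2*x+1) (2*y) (by omega),
            hPF_le (m+1) x y (by omega)]
      · rcases le_or_gt 0 x with hx | hx
        · rw [hPF_pm (m+1) (by omega) (2*x+1) (2*y) (by omega) (by omega)]
          simp only [Nat.add_sub_cancel]
          rw [show 2*x + 1 - 2^m = 2*(x - 2^(m-1)) + 1 by rw [e1]; ring,
              show -(2*y + 2^m) = 2*(-(y + 2^(m-1))) by rw [e1]; ring,
              (ih (x - 2^(m-1)) (-(y + 2^(m-1))) (by omega) (by omega) (by omega) (by omega)).1.2.2.2,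
              hPF_pm m hm1 x y hx hy]
        · rw [hPF_mm (m+1) (by omega) (2*x+1) (2*y) (by omega) (by omega)]
          simp only [Nat.add_sub_cancel]
          rw [show -(2*x + 1 + 2^m) - 1 = 2*(-(x + 2^(m-1)) - 1) by rw [e1]; ring,
              show -(2*y + 2^m) = 2*(-(y + 2^(m-1))) by rw [e1]; ring,
              (ih (-(x + 2^(m-1)) - 1) (-(y + 2^(m-1))) (by omega) (by omega) (by omega) (by omega)).1.2.2.1,
              hPF_mm m hm1 x y hx hy]
    · subst hy
      simp only [mul_zero]
      rcases le_or_gt 0 x with hx | hx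
      · rw [hPF_central, hPF_central,
            if_pos (show 0 ≤ 2*x + 1 ∧ 2*x + 1 ≤ 2^(m+1) - 1 by omega),
            if_pos (show 0 ≤ x ∧ x ≤ 2^m - 1 by omega)]
      · rw [hPF_central, hPF_central,
            if_neg (show ¬(0 ≤ 2*x + 1 ∧ 2*x + 1 ≤ 2^(m+1) - 1) by omega),
            if_neg (show ¬(0 ≤ x ∧ x ≤ 2^m - 1) by omega),
            if_pos (show -(2^(m+1):ℤ) ≤ 2*x + 1 ∧ 2*x + 1 ≤ -1 by omega),
            if_pos (show -(2^m:ℤ) ≤ x ∧ x ≤ -1 by omega)]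
    · rcases le_or_gt 0 x with hx | hx
      · rw [hPF_pp (m+1) (by omega) (2*x+1) (2*y) (by omega) (by omega)]
        simp only [Nat.add_sub_cancel]
        rw [show 2*x + 1 - 2^m = 2*(x - 2^(m-1)) + 1 by rw [e1]; ring,
            show 2*y - 2^m = 2*(y - 2^(m-1)) by rw [e1]; ring,
            (ih (x - 2^(m-1)) (y - 2^(m-1)) (by omega) (by omega) (by omega) (by omega)).1.2.2.2,
            hPF_pp m hm1 x y hx hy]
      · rw [hPF_mp (m+1) (by omega) (2*x+1) (2*y) (by omega) (by omega)]
        simp only [Nat.add_sub_cancel]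
        rw [show -(2*x + 1 + 2^m) - 1 = 2*(-(x + 2^(m-1)) - 1) by rw [e1]; ring,
            show 2*y - 2^m = 2*(y - 2^(m-1)) by rw [e1]; ring,
            (ih (-(x + 2^(m-1)) - 1) (y - 2^(m-1)) (by omega) (by omega) (by omega) (by omega)).1.2.2.1,
            hPF_mp m hm1 x y hx hy]
  · -- B1 : vPF (m+2) (2x+1) (2y) = (-1)^(epar x + epar y)
    rcases le_or_gt 0 x with hx | hx <;> rcases le_or_gt 0 y with hy | hy
    · rw [vPF_pp (m+1) (by omega) (2*x+1) (2*y) (by omega) (by omega)]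
      simp only [Nat.add_sub_cancel]
      rw [show 2*x + 1 - 2^m = 2*(x - 2^(m-1)) + 1 by rw [e1]; ring,
          show 2*y - 2^m = 2*(y - 2^(m-1)) by rw [e1]; ring,
          (ih (x - 2^(m-1)) (y - 2^(m-1)) (by omega) (by omega) (by omega) (by omega)).2.1]
      simp only [pow_add, neg_one_pow_epar_emod]
      split_ifs <;> omega
    · rw [vPF_pm (m+1) (by omega) (2*x+1) (2*y) (by omega) (by omega)]
      simp only [Nat.add_sub_cancel]
      rw [show 2*x + 1 - 2^m = 2*(x - 2^(m-1)) + 1 by rw [e1]; ring,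
          show -(2*y + 2^m) - 1 = 2*(-(y + 2^(m-1)) - 1) + 1 by rw [e1]; ring,
          (ih (x - 2^(m-1)) (-(y + 2^(m-1)) - 1) (by omega) (by omega) (by omega) (by omega)).2.2.1]
      simp only [pow_add, neg_one_pow_epar_emod]
      split_ifs <;> omega
    · rw [vPF_mp (m+1) (by omega) (2*x+1) (2*y) (by omega) (by omega)]
      simp only [Nat.add_sub_cancel]
      rw [show -(2*x + 1 + 2^m) = 2*(-(x + 2^(m-1)) - 1) + 1 by rw [e1]; ring,
          show 2*y - 2^m = 2*(y - 2^(m-1)) by rw [e1]; ring,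
          (ih (-(x + 2^(m-1)) - 1) (y - 2^(m-1)) (by omega) (by omega) (by omega) (by omega)).2.1]
      simp only [pow_add, neg_one_pow_epar_emod]
      split_ifs <;> omega
    · rw [vPF_mm (m+1) (by omega) (2*x+1) (2*y) (by omega) (by omega)]
      simp only [Nat.add_sub_cancel]
      rw [show -(2*x + 1 + 2^m) = 2*(-(x + 2^(m-1)) - 1) + 1 by rw [e1]; ring,
          show -(2*y + 2^m) - 1 = 2*(-(y + 2^(m-1)) - 1) + 1 by rw [e1]; ring,
          (ih (-(x + 2^(m-1)) - 1) (-(y + 2^(m-1)) - 1) (by omega) (by omega) (by omega) (by omega)).2.2.1]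
      simp only [pow_add, neg_one_pow_epar_emod]
      split_ifs <;> omega
  · -- B2 : vPF (m+2) (2x+1) (2y+1) = (-1)^(epar x + epar y)
    rcases le_or_gt 0 x with hx | hx <;> rcases le_or_gt 0 y with hy | hy
    · rw [vPF_pp (m+1) (by omega) (2*x+1) (2*y+1) (by omega) (by omega)]
      simp only [Nat.add_sub_cancel]
      rw [show 2*x + 1 - 2^m = 2*(x - 2^(m-1)) + 1 by rw [e1]; ring,
          show 2*y + 1 - 2^m = 2*(y - 2^(m-1)) + 1 by rw [e1]; ring,
          (ih (x - 2^(m-1)) (y - 2^(m-1)) (by omega) (by omega) (by omega) (by omega)).2.2.1]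
      simp only [pow_add, neg_one_pow_epar_emod]
      split_ifs <;> omega
    · rw [vPF_pm (m+1) (by omega) (2*x+1) (2*y+1) (by omega) (by omega)]
      simp only [Nat.add_sub_cancel]
      rw [show 2*x + 1 - 2^m = 2*(x - 2^(m-1)) + 1 by rw [e1]; ring,
          show -(2*y + 1 + 2^m) - 1 = 2*(-(y + 2^(m-1)) - 1) by rw [e1]; ring,
          (ih (x - 2^(m-1)) (-(y + 2^(m-1)) - 1) (by omega) (by omega) (by omega) (by omega)).2.1]
      simp only [pow_add, neg_one_pow_epar_emod]
      split_ifs <;> omega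
    · rw [vPF_mp (m+1) (by omega) (2*x+1) (2*y+1) (by omega) (by omega)]
      simp only [Nat.add_sub_cancel]
      rw [show -(2*x + 1 + 2^m) = 2*(-(x + 2^(m-1)) - 1) + 1 by rw [e1]; ring,
          show 2*y + 1 - 2^m = 2*(y - 2^(m-1)) + 1 by rw [e1]; ring,
          (ih (-(x + 2^(m-1)) - 1) (y - 2^(m-1)) (by omega) (by omega) (by omega) (by omega)).2.2.1]
      simp only [pow_add, neg_one_pow_epar_emod]
      split_ifs <;> omega
    · rw [vPF_mm (m+1) (by omega) (2*x+1) (2*y+1) (by omega) (by omega)]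
      simp only [Nat.add_sub_cancel]
      rw [show -(2*x + 1 + 2^m) = 2*(-(x + 2^(m-1)) - 1) + 1 by rw [e1]; ring,
          show -(2*y + 1 + 2^m) - 1 = 2*(-(y + 2^(m-1)) - 1) by rw [e1]; ring,
          (ih (-(x + 2^(m-1)) - 1) (-(y + 2^(m-1)) - 1) (by omega) (by omega) (by omega) (by omega)).2.1]
      simp only [pow_add, neg_one_pow_epar_emod]
      split_ifs <;> omega
  · -- B3 : hPF (m+2) (2x) (2y+1) = -(-1)^(epar y)
    rcases le_or_gt 0 x with hx | hx <;> rcases le_or_gt 0 y with hy | hy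
    · rw [hPF_pp (m+1) (by omega) (2*x) (2*y+1) (by omega) (by omega)]
      simp only [Nat.add_sub_cancel]
      rw [show 2*x - 2^m = 2*(x - 2^(m-1)) by rw [e1]; ring,
          show 2*y + 1 - 2^m = 2*(y - 2^(m-1)) + 1 by rw [e1]; ring,
          (ih (x - 2^(m-1)) (y - 2^(m-1)) (by omega) (by omega) (by omega) (by omega)).2.2.2.1]
      simp only [pow_add, neg_one_pow_epar_emod]
      split_ifs <;> omega
    · rw [hPF_pm (m+1) (by omega) (2*x) (2*y+1) (by omega) (by omega)]
      simp only [Nat.add_sub_cancel]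
      rw [show 2*x - 2^m = 2*(x - 2^(m-1)) by rw [e1]; ring,
          show -(2*y + 1 + 2^m) = 2*(-(y + 2^(m-1)) - 1) + 1 by rw [e1]; ring,
          (ih (x - 2^(m-1)) (-(y + 2^(m-1)) - 1) (by omega) (by omega) (by omega) (by omega)).2.2.2.1]
      simp only [pow_add, neg_one_pow_epar_emod]
      split_ifs <;> omega
    · rw [hPF_mp (m+1) (by omega) (2*x) (2*y+1) (by omega) (by omega)]
      simp only [Nat.add_sub_cancel]
      rw [show -(2*x + 2^m) - 1 = 2*(-(x + 2^(m-1)) - 1) + 1 by rw [e1]; ring,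
          show 2*y + 1 - 2^m = 2*(y - 2^(m-1)) + 1 by rw [e1]; ring,
          (ih (-(x + 2^(m-1)) - 1) (y - 2^(m-1)) (by omega) (by omega) (by omega) (by omega)).2.2.2.2]
      simp only [pow_add, neg_one_pow_epar_emod]
      split_ifs <;> omega
    · rw [hPF_mm (m+1) (by omega) (2*x) (2*y+1) (by omega) (by omega)]
      simp only [Nat.add_sub_cancel]
      rw [show -(2*x + 2^m) - 1 = 2*(-(x + 2^(m-1)) - 1) + 1 by rw [e1]; ring,
          show -(2*y + 1 + 2^m) = 2*(-(y + 2^(m-1)) - 1) + 1 by rw [e1]; ring,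
          (ih (-(x + 2^(m-1)) - 1) (-(y + 2^(m-1)) - 1) (by omega) (by omega) (by omega) (by omega)).2.2.2.2]
      simp only [pow_add, neg_one_pow_epar_emod]
      split_ifs <;> omega
  · -- B4 : hPF (m+2) (2x+1) (2y+1) = (-1)^(epar y)
    rcases le_or_gt 0 x with hx | hx <;> rcases le_or_gt 0 y with hy | hy
    · rw [hPF_pp (m+1) (by omega) (2*x+1) (2*y+1) (by omega) (by omega)]
      simp only [Nat.add_sub_cancel]
      rw [show 2*x + 1 - 2^m = 2*(x - 2^(m-1)) + 1 by rw [e1]; ring,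
          show 2*y + 1 - 2^m = 2*(y - 2^(m-1)) + 1 by rw [e1]; ring,
          (ih (x - 2^(m-1)) (y - 2^(m-1)) (by omega) (by omega) (by omega) (by omega)).2.2.2.2]
      simp only [pow_add, neg_one_pow_epar_emod]
      split_ifs <;> omega
    · rw [hPF_pm (m+1) (by omega) (2*x+1) (2*y+1) (by omega) (by omega)]
      simp only [Nat.add_sub_cancel]
      rw [show 2*x + 1 - 2^m = 2*(x - 2^(m-1)) + 1 by rw [e1]; ring,
          show -(2*y + 1 + 2^m) = 2*(-(y + 2^(m-1)) - 1) + 1 by rw [e1]; ring,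
          (ih (x - 2^(m-1)) (-(y + 2^(m-1)) - 1) (by omega) (by omega) (by omega) (by omega)).2.2.2.2]
      simp only [pow_add, neg_one_pow_epar_emod]
      split_ifs <;> omega
    · rw [hPF_mp (m+1) (by omega) (2*x+1) (2*y+1) (by omega) (by omega)]
      simp only [Nat.add_sub_cancel]
      rw [show -(2*x + 1 + 2^m) - 1 = 2*(-(x + 2^(m-1)) - 1) by rw [e1]; ring,
          show 2*y + 1 - 2^m = 2*(y - 2^(m-1)) + 1 by rw [e1]; ring,
          (ih (-(x + 2^(m-1)) - 1) (y - 2^(m-1)) (by omega) (by omega) (by omega) (by omega)).2.2.2.1]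
      simp only [pow_add, neg_one_pow_epar_emod]
      split_ifs <;> omega
    · rw [hPF_mm (m+1) (by omega) (2*x+1) (2*y+1) (by omega) (by omega)]
      simp only [Nat.add_sub_cancel]
      rw [show -(2*x + 1 + 2^m) - 1 = 2*(-(x + 2^(m-1)) - 1) by rw [e1]; ring,
          show -(2*y + 1 + 2^m) = 2*(-(y + 2^(m-1)) - 1) + 1 by rw [e1]; ring,
          (ih (-(x + 2^(m-1)) - 1) (-(y + 2^(m-1)) - 1) (by omega) (by omega) (by omega) (by omega)).2.2.2.1]
      simp only [pow_add, neg_one_pow_epar_emod]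
      split_ifs <;> omega

private lemma pfKey : ∀ n : ℕ, 2 ≤ n → ∀ x y : ℤ,
    -(2 ^ (n - 1) : ℤ) ≤ x → x < 2 ^ (n - 1) →
    -(2 ^ (n - 1) : ℤ) ≤ y → y < 2 ^ (n - 1) → Stmt n x y := by
  intro n
  induction n with
  | zero => omega
  | succ m ih =>
    intro hn x y hx1 hx2 hy1 hy2
    rcases Nat.lt_or_ge m 2 with h | h
    · have hm1 : m = 1 := by omega
      subst hm1
      exact pfBase x y hx1 hx2 hy1 hy2
    · exact pfStep m h (fun a b ha1 ha2 hb1 hb2 => ih h a b ha1 ha2 hb1 hb2)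
        x y hx1 hx2 hy1 hy2

end PFhelpers
/-- For `n ≥ 2` and `−2^(n−1) ≤ x, y < 2^(n−1)`:
(a) doubling: `v_{n+1}(2x, 2y) = v_{n+1}(2x, 2y+1) = v_n(x,y)` and
`h_{n+1}(2x, 2y) = h_{n+1}(2x+1, 2y) = h_n(x,y)`;
(b) inserted creases: `v_{n+1}(2x+1, 2y) = v_{n+1}(2x+1, 2y+1) = (−1)^(e(x)+e(y))`,
`h_{n+1}(2x, 2y+1) = −(−1)^(e(y))` and `h_{n+1}(2x+1, 2y+1) = (−1)^(e(y))`. -/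
theorem stmt14 (n : ℕ) (hn : 2 ≤ n) (x y : ℤ)
    (hx1 : -(2 ^ (n - 1)) ≤ x) (hx2 : x < 2 ^ (n - 1))
    (hy1 : -(2 ^ (n - 1)) ≤ y) (hy2 : y < 2 ^ (n - 1)) :
    (vPF (n + 1) (2 * x) (2 * y) = vPF n x y ∧
     vPF (n + 1) (2 * x) (2 * y + 1) = vPF n x y ∧
     hPF (n + 1) (2 * x) (2 * y) = hPF n x y ∧
     hPF (n + 1) (2 * x + 1) (2 * y) = hPF n x y) ∧
    (vPF (n + 1) (2 * x + 1) (2 * y) = (-1 : ℤ) ^ (epar x + epar y) ∧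
     vPF (n + 1) (2 * x + 1) (2 * y + 1) = (-1 : ℤ) ^ (epar x + epar y) ∧
     hPF (n + 1) (2 * x) (2 * y + 1) = -(-1 : ℤ) ^ (epar y) ∧
     hPF (n + 1) (2 * x + 1) (2 * y + 1) = (-1 : ℤ) ^ (epar y)) := by
  exact pfKey n hn x y hx1 hx2 hy1 hy2
end
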